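/- arXiv:1602.00855 — 7 statements merged into one kernel-verified Lean document; each statement's English description precedes it below -/
import Mathlib

section
/- Let r > 0, T > 0, α ∈ [1, ∞) and n ∈ ℕ*. The closure P̄_T^α(ℝ₊, μ_r; ℝⁿ) of the space of continuous T-periodic functions in L^α(ℝ₊, μ_r; ℝⁿ) is exactly the set of all f ∈ L^α(ℝ₊, μ_r; ℝⁿ) such that f(t + T) = f(t) for Lebesgue-almost every t ∈ ℝ₊. -/
set_option maxHeartbeats 1000000
set_option synthInstance.maxHeartbeats 400000

open MeasureTheory Real Set

/-- The weighted measure `μ_r` on `ℝ₊`: density `t ↦ e^{-rt}` w.r.t. Lebesgue measure,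
restricted to `[0, ∞)`. -/
noncomputable def muW (r : ℝ) : Measure ℝ :=
  (volume.withDensity fun t => ENNReal.ofReal (Real.exp (-r * t))).restrict (Set.Ici 0)

namespace MuWAux

open Filter ENNReal

lemma w_meas (r : ℝ) : Measurable fun t : ℝ => ENNReal.ofReal (Real.exp (-r * t)) :=
  ENNReal.measurable_ofReal.comp ((Real.continuous_exp.measurable).comp
    (measurable_const.mul measurable_id))

lemma muW_eq (r : ℝ) :
    muW r = (volume.restrict (Ici 0)).withDensity fun t => ENNReal.ofReal (Real.exp (-r * t)) := by
  rw [muW, restrict_withDensity measurableSet_Ici]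

lemma muW_ac (r : ℝ) : muW r ≪ volume.restrict (Ici 0) := by
  rw [muW_eq]; exact withDensity_absolutelyContinuous _ _

lemma ac_muW (r : ℝ) : (volume.restrict (Ici 0) : Measure ℝ) ≪ muW r := by
  rw [muW_eq]
  refine Measure.AbsolutelyContinuous.mk fun s hs h0 => ?_
  rw [withDensity_apply_eq_zero (w_meas r)] at h0
  have : {x : ℝ | ENNReal.ofReal (Real.exp (-r * x)) ≠ 0} = univ := by
    ext x; simp [ENNReal.ofReal_eq_zero, not_le, Real.exp_pos]
  rwa [this, univ_inter] at h0

lemma qmp_add (c : ℝ) (hc : 0 ≤ c) :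
    Measure.QuasiMeasurePreserving (fun t : ℝ => t + c)
      (volume.restrict (Ici 0)) (volume.restrict (Ici 0)) := by
  refine ⟨measurable_add_const c, Measure.AbsolutelyContinuous.mk fun s hs h0 => ?_⟩
  rw [Measure.restrict_apply hs] at h0
  rw [Measure.map_apply (measurable_add_const c) hs,
    Measure.restrict_apply (hs.preimage (measurable_add_const c))]
  have hsub : (fun t : ℝ => t + c) ⁻¹' s ∩ Ici 0 ⊆ (fun t : ℝ => t + c) ⁻¹' (s ∩ Ici 0) := by
    rintro t ⟨h1, h2⟩
    exact ⟨h1, by simp only [mem_Ici] at h2 ⊢; linarith⟩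
  refine le_antisymm (le_trans (measure_mono hsub) ?_) zero_le
  rw [measure_preimage_add_right]
  exact h0.le

noncomputable def sig (T : ℝ) (t : ℝ) : ℝ := Int.fract (t / T) * T

lemma sig_meas (T : ℝ) : Measurable (sig T) :=
  (measurable_id.div_const T).fract.mul_const T

lemma sig_mem (T : ℝ) (hT : 0 < T) (t : ℝ) : sig T t ∈ Ico 0 T :=
  ⟨mul_nonneg (Int.fract_nonneg _) hT.le,
    by unfold sig; simpa using (mul_lt_mul_of_pos_right (Int.fract_lt_one (t / T)) hT)⟩

lemma sig_eq_of_mem {T : ℝ} (hT : 0 < T) {t : ℝ} {k : ℕ}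
    (h : t ∈ Ico ((k : ℝ) * T) (((k : ℝ) + 1) * T)) : sig T t = t - k * T := by
  obtain ⟨h1, h2⟩ := h
  have hfl : ⌊t / T⌋ = (k : ℤ) := by
    rw [Int.floor_eq_iff]
    constructor
    · push_cast; rw [le_div_iff₀ hT]; linarith
    · push_cast; rw [div_lt_iff₀ hT]; linarith
  unfold sig
  rw [Int.fract, hfl]
  push_cast
  field_simp

lemma mem_cover {T : ℝ} (hT : 0 < T) {t : ℝ} (ht : 0 ≤ t) :
    t ∈ Ico ((⌊t / T⌋.toNat : ℝ) * T) (((⌊t / T⌋.toNat : ℝ) + 1) * T) := by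
  have h0 : (0:ℤ) ≤ ⌊t / T⌋ := Int.floor_nonneg.2 (div_nonneg ht hT.le)
  have hc : ((⌊t / T⌋.toNat : ℝ)) = ((⌊t / T⌋ : ℤ) : ℝ) := by
    rw [← Int.cast_natCast, Int.toNat_of_nonneg h0]
  constructor
  · rw [hc, ← le_div_iff₀ hT]; exact Int.floor_le _
  · rw [hc, ← div_lt_iff₀ hT]; exact Int.lt_floor_add_one _

lemma sig_eq_self {T : ℝ} (hT : 0 < T) {t : ℝ} (h : t ∈ Ico 0 T) : sig T t = t := by
  have := sig_eq_of_mem hT (k := 0) (t := t) (by simpa using h)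
  simpa using this

lemma qmp_sig {T : ℝ} (hT : 0 < T) :
    Measure.QuasiMeasurePreserving (sig T)
      (volume.restrict (Ici 0)) (volume.restrict (Ico 0 T)) := by
  refine ⟨sig_meas T, Measure.AbsolutelyContinuous.mk fun s hs h0 => ?_⟩
  rw [Measure.restrict_apply hs] at h0
  rw [Measure.map_apply (sig_meas T) hs,
    Measure.restrict_apply ((hs.preimage (sig_meas T)))]
  have cover : sig T ⁻¹' s ∩ Ici 0 ⊆
      ⋃ k : ℕ, (fun t : ℝ => t + (-((k : ℝ) * T))) ⁻¹' (s ∩ Ico 0 T) := by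
    rintro t ⟨h1, h2⟩
    refine mem_iUnion.2 ⟨⌊t / T⌋.toNat, ?_⟩
    have hmem := mem_cover hT (mem_Ici.1 h2)
    have hsig := sig_eq_of_mem hT hmem
    simp only [mem_preimage]
    have : t + -((⌊t / T⌋.toNat : ℝ) * T) = sig T t := by rw [hsig]; ring
    rw [this]
    exact ⟨h1, sig_mem T hT t⟩
  refine le_antisymm (le_trans (measure_mono cover)
    (le_trans (measure_iUnion_le _) (le_of_eq ?_))) zero_le
  have : ∀ k : ℕ, volume ((fun t : ℝ => t + (-((k : ℝ) * T))) ⁻¹' (s ∩ Ico 0 T)) = 0 := by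
    intro k
    rw [measure_preimage_add_right]
    exact h0
  simp only [this, tsum_zero]

lemma Ici_eq_iUnion (T : ℝ) (hT : 0 < T) :
    Ici (0:ℝ) = ⋃ k : ℕ, Ico ((k : ℝ) * T) (((k : ℝ) + 1) * T) := by
  ext t
  simp only [mem_Ici, mem_iUnion, mem_Ico]
  constructor
  · intro ht
    have h0 : (0:ℤ) ≤ ⌊t / T⌋ := Int.floor_nonneg.2 (div_nonneg ht hT.le)
    have hc : ((⌊t / T⌋.toNat : ℝ)) = ((⌊t / T⌋ : ℤ) : ℝ) := by
      rw [← Int.cast_natCast, Int.toNat_of_nonneg h0]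
    refine ⟨⌊t / T⌋.toNat, ?_, ?_⟩
    · rw [hc, ← le_div_iff₀ hT]; exact Int.floor_le _
    · rw [hc, ← div_lt_iff₀ hT]; exact Int.lt_floor_add_one _
  · rintro ⟨k, h1, _⟩
    have : (0:ℝ) ≤ (k : ℝ) * T := mul_nonneg (Nat.cast_nonneg k) hT.le
    linarith

/-- Key geometric-series estimate. -/
lemma lintegral_comp_mk_le {r T : ℝ} (hr : 0 < r) (hT : 0 < T) [Fact (0 < T)]
    (ψ : AddCircle T → ℝ≥0∞) (hψ : Measurable ψ) :
    ∫⁻ t, ψ (t : AddCircle T) ∂(muW r) ≤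
      (1 - ENNReal.ofReal (Real.exp (-(r * T))))⁻¹ * ∫⁻ x, ψ x := by
  have hmk : Measurable fun t : ℝ => ψ (t : AddCircle T) :=
    hψ.comp AddCircle.measurable_mk'
  rw [muW_eq, lintegral_withDensity_eq_lintegral_mul _ (w_meas r) hmk]
  simp only [Pi.mul_apply]
  set c : ℝ≥0∞ := ENNReal.ofReal (Real.exp (-(r * T))) with hc
  set I : ℝ≥0∞ := ∫⁻ x : AddCircle T, ψ x with hI
  calc ∫⁻ t in Ici 0, ENNReal.ofReal (Real.exp (-r * t)) * ψ (t : AddCircle T)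
      = ∫⁻ t in ⋃ k : ℕ, Ico ((k:ℝ) * T) (((k:ℝ) + 1) * T),
          ENNReal.ofReal (Real.exp (-r * t)) * ψ (t : AddCircle T) := by
        rw [← Ici_eq_iUnion T hT]
    _ ≤ ∑' k : ℕ, ∫⁻ t in Ico ((k:ℝ) * T) (((k:ℝ) + 1) * T),
          ENNReal.ofReal (Real.exp (-r * t)) * ψ (t : AddCircle T) :=
        lintegral_iUnion_le _ _
    _ ≤ ∑' k : ℕ, c ^ k * I := ENNReal.tsum_le_tsum fun k => ?_
    _ = (∑' k : ℕ, c ^ k) * I := ENNReal.tsum_mul_right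
    _ = (1 - c)⁻¹ * I := by rw [ENNReal.tsum_geometric]
  calc ∫⁻ t in Ico ((k:ℝ) * T) (((k:ℝ) + 1) * T),
        ENNReal.ofReal (Real.exp (-r * t)) * ψ (t : AddCircle T)
      ≤ ∫⁻ t in Ico ((k:ℝ) * T) (((k:ℝ) + 1) * T), c ^ k * ψ (t : AddCircle T) := by
        refine setLIntegral_mono' measurableSet_Ico fun t ht => ?_
        refine mul_le_mul_left ?_ _
        rw [hc, ← ENNReal.ofReal_pow (Real.exp_nonneg _), ← Real.exp_nat_mul]
        exact ENNReal.ofReal_le_ofReal (Real.exp_le_exp.2 (by nlinarith [ht.1]))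
    _ = c ^ k * ∫⁻ t in Ico ((k:ℝ) * T) (((k:ℝ) + 1) * T), ψ (t : AddCircle T) :=
        lintegral_const_mul _ hmk
    _ = c ^ k * ∫⁻ t in Ioc ((k:ℝ) * T) ((k:ℝ) * T + T), ψ (t : AddCircle T) := by
        rw [Measure.restrict_congr_set Ico_ae_eq_Ioc]
        ring_nf
    _ = c ^ k * I := by rw [AddCircle.lintegral_preimage T ((k:ℝ) * T) ψ]

/-- On `[0,T)` the Lebesgue integral is controlled by the `muW r` integral. -/
lemma lintegral_Ico_le {r T : ℝ} (hr : 0 < r) (hT : 0 < T)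
    (X : ℝ → ℝ≥0∞) (hX : Measurable X) :
    ∫⁻ t in Ico 0 T, X t ≤ ENNReal.ofReal (Real.exp (r * T)) * ∫⁻ t, X t ∂(muW r) := by
  rw [muW_eq, lintegral_withDensity_eq_lintegral_mul _ (w_meas r) hX]
  simp only [Pi.mul_apply]
  calc ∫⁻ t in Ico 0 T, X t
      ≤ ∫⁻ t in Ico 0 T, ENNReal.ofReal (Real.exp (r * T)) *
          (ENNReal.ofReal (Real.exp (-r * t)) * X t) := by
        refine setLIntegral_mono' measurableSet_Ico fun t ht => ?_
        rw [← mul_assoc, ← ENNReal.ofReal_mul (Real.exp_nonneg _), ← Real.exp_add]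
        nth_rewrite 1 [show X t = 1 * X t by rw [one_mul]]
        refine mul_le_mul_left ?_ _
        rw [show (1:ℝ≥0∞) = ENNReal.ofReal 1 by simp]
        exact ENNReal.ofReal_le_ofReal
          (by nlinarith [Real.add_one_le_exp (r * T + -r * t), ht.2])
    _ = ENNReal.ofReal (Real.exp (r * T)) *
          ∫⁻ t in Ico 0 T, ENNReal.ofReal (Real.exp (-r * t)) * X t :=
        lintegral_const_mul _ ((w_meas r).mul hX)
    _ ≤ ENNReal.ofReal (Real.exp (r * T)) *
          ∫⁻ t in Ici 0, ENNReal.ofReal (Real.exp (-r * t)) * X t :=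
        mul_le_mul_right (lintegral_mono_set fun t ht => ht.1) _

instance muW_finite (r : ℝ) [Fact (0 < r)] : IsFiniteMeasure (muW r) := by
  constructor
  rw [muW, Measure.restrict_apply MeasurableSet.univ, univ_inter,
    withDensity_apply _ measurableSet_Ici]
  have hr : (0:ℝ) < r := Fact.out
  have hint : IntegrableOn (fun t : ℝ => Real.exp (-r * t)) (Ioi 0) volume :=
    exp_neg_integrableOn_Ioi 0 hr
  rw [Measure.restrict_congr_set Ioi_ae_eq_Ici.symm]
  have := hint.2
  rw [hasFiniteIntegral_iff_ofReal (ae_of_all _ fun t => Real.exp_nonneg _)] at this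
  exact this

end MuWAux

open MuWAux Filter ENNReal Topology

/-- The closure of the space of continuous `T`-periodic functions in
`L^α(ℝ₊, μ_r; ℝⁿ)` is exactly the set of `f ∈ L^α` with `f(t+T) = f(t)` for
Lebesgue-a.e. `t ∈ ℝ₊`. -/
theorem closure_periodic_eq_ae_periodic
    (r T α : ℝ) (hr : 0 < r) (hT : 0 < T) (hα : 1 ≤ α) (n : ℕ) (hn : 0 < n)
    [Fact (1 ≤ ENNReal.ofReal α)] :
    closure {F : Lp (EuclideanSpace ℝ (Fin n)) (ENNReal.ofReal α) (muW r) |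
        ∃ g : ℝ → EuclideanSpace ℝ (Fin n), Continuous g ∧ Function.Periodic g T ∧
          (F : ℝ → EuclideanSpace ℝ (Fin n)) =ᵐ[muW r] g} =
      {F : Lp (EuclideanSpace ℝ (Fin n)) (ENNReal.ofReal α) (muW r) |
        ∀ᵐ t ∂(volume.restrict (Set.Ici (0:ℝ))),
          (F : ℝ → EuclideanSpace ℝ (Fin n)) (t + T) =
            (F : ℝ → EuclideanSpace ℝ (Fin n)) t} := by
  classical
  haveI : Fact (0 < T) := ⟨hT⟩
  haveI : Fact (0 < r) := ⟨hr⟩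
  set p : ℝ≥0∞ := ENNReal.ofReal α with hp
  have hα0 : (0:ℝ) < α := lt_of_lt_of_le one_pos hα
  have hp0 : p ≠ 0 := by simp [hp, ENNReal.ofReal_eq_zero, not_le, hα0]
  have hptop : p ≠ ∞ := ENNReal.ofReal_ne_top
  have hptR : p.toReal = α := ENNReal.toReal_ofReal hα0.le
  set ν : Measure ℝ := volume.restrict (Ici 0) with hν
  apply subset_antisymm
  · refine closure_minimal ?_ ?_
    · rintro F ⟨g, hgc, hgp, hFg⟩
      have hFgν : (F : ℝ → EuclideanSpace ℝ (Fin n)) =ᵐ[ν] g :=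
        hFg.filter_mono (ac_muW r).ae_le
      have hshift : ∀ᵐ t ∂ν, (F : ℝ → EuclideanSpace ℝ (Fin n)) (t + T) = g (t + T) :=
        (qmp_add T hT.le).ae
          (p := fun s => (F : ℝ → EuclideanSpace ℝ (Fin n)) s = g s) hFgν
      filter_upwards [hFgν, hshift] with t h1 h2
      rw [h2, hgp t, ← h1]
    · refine IsSeqClosed.isClosed (fun x F hx hlim => ?_)
      have h1 : Tendsto (fun k => eLpNorm (⇑(x k) - ⇑F) p (muW r)) atTop (𝓝 0) :=
        (Lp.tendsto_Lp_iff_tendsto_eLpNorm' x F).1 hlim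
      have h2 : TendstoInMeasure (muW r) (fun k => ⇑(x k)) atTop ⇑F :=
        tendstoInMeasure_of_tendsto_eLpNorm hp0
          (fun k => Lp.aestronglyMeasurable _) (Lp.aestronglyMeasurable _) h1
      obtain ⟨ns, hns, htend⟩ := h2.exists_seq_tendsto_ae
      have htendν : ∀ᵐ t ∂ν,
          Tendsto (fun i => (x (ns i) : ℝ → EuclideanSpace ℝ (Fin n)) t) atTop
            (𝓝 ((F : ℝ → EuclideanSpace ℝ (Fin n)) t)) :=
        htend.filter_mono (ac_muW r).ae_le
      have htendshift := (qmp_add T hT.le).ae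
        (p := fun s => Tendsto (fun i => (x (ns i) : ℝ → EuclideanSpace ℝ (Fin n)) s) atTop
          (𝓝 ((F : ℝ → EuclideanSpace ℝ (Fin n)) s))) htendν
      have hmem : ∀ᵐ t ∂ν, ∀ i : ℕ,
          (x (ns i) : ℝ → EuclideanSpace ℝ (Fin n)) (t + T) =
            (x (ns i) : ℝ → EuclideanSpace ℝ (Fin n)) t :=
        ae_all_iff.2 fun i => hx (ns i)
      filter_upwards [htendν, htendshift, hmem] with t ha hb hc
      have : Tendsto (fun i => (x (ns i) : ℝ → EuclideanSpace ℝ (Fin n)) t) atTop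
          (𝓝 ((F : ℝ → EuclideanSpace ℝ (Fin n)) (t + T))) := by
        simpa only [hc] using hb
      exact tendsto_nhds_unique this ha
  · intro F hF
    rw [Metric.mem_closure_iff]
    intro ε hε
    have hsm := Lp.aestronglyMeasurable F
    obtain ⟨f₀, hf₀sm, hff₀⟩ :
        ∃ f₀ : ℝ → EuclideanSpace ℝ (Fin n), StronglyMeasurable f₀ ∧
          (F : ℝ → EuclideanSpace ℝ (Fin n)) =ᵐ[muW r] f₀ :=
      ⟨hsm.mk _, hsm.stronglyMeasurable_mk, hsm.ae_eq_mk⟩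
    have hff₀ν : (F : ℝ → EuclideanSpace ℝ (Fin n)) =ᵐ[ν] f₀ :=
      hff₀.filter_mono (ac_muW r).ae_le
    -- a.e. periodicity of the measurable representative
    have h1 : ∀ᵐ t ∂ν, f₀ (t + T) = f₀ t := by
      have hs : ∀ᵐ t ∂ν, (F : ℝ → EuclideanSpace ℝ (Fin n)) (t + T) = f₀ (t + T) :=
        (qmp_add T hT.le).ae
          (p := fun s => (F : ℝ → EuclideanSpace ℝ (Fin n)) s = f₀ s) hff₀ν
      filter_upwards [hF, hs, hff₀ν] with t ha hb hc
      rw [← hb, ha, hc]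
    have hk : ∀ k : ℕ, ∀ᵐ t ∂ν, f₀ (t + k * T) = f₀ t := by
      intro k; induction k with
      | zero => simp
      | succ k ih =>
        have hstep : ∀ᵐ t ∂ν, f₀ (t + (k:ℝ) * T + T) = f₀ (t + (k:ℝ) * T) :=
          (qmp_add ((k:ℝ) * T) (by positivity)).ae
            (p := fun s => f₀ (s + T) = f₀ s) h1
        filter_upwards [hstep, ih] with t ha hb
        have he : t + ((k:ℕ)+1 : ℕ) * T = t + (k:ℝ) * T + T := by push_cast; ring
        rw [he, ha, hb]
    have hall : ∀ᵐ t ∂(volume.restrict (Ico 0 T)), ∀ k : ℕ, f₀ (t + k * T) = f₀ t :=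
      ae_restrict_of_ae_restrict_of_subset Ico_subset_Ici_self (ae_all_iff.2 hk)
    have hσ : ∀ᵐ t ∂ν, ∀ k : ℕ, f₀ (sig T t + k * T) = f₀ (sig T t) :=
      (qmp_sig hT).ae (p := fun s => ∀ k : ℕ, f₀ (s + k * T) = f₀ s) hall
    have hIci : ∀ᵐ t ∂ν, t ∈ Ici (0:ℝ) := ae_restrict_mem measurableSet_Ici
    have hfold : f₀ =ᵐ[ν] fun t => f₀ (sig T t) := by
      filter_upwards [hσ, hIci] with t ha ht
      have hmem := mem_cover hT (mem_Ici.1 ht)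
      have hsig := sig_eq_of_mem hT hmem
      have he : sig T t + (⌊t / T⌋.toNat : ℝ) * T = t := by rw [hsig]; ring
      calc f₀ t = f₀ (sig T t + (⌊t / T⌋.toNat : ℝ) * T) := by rw [he]
        _ = f₀ (sig T t) := ha _
    -- lift to the circle
    set fh : AddCircle T → EuclideanSpace ℝ (Fin n) :=
      fun x => f₀ ((AddCircle.equivIco T 0 x : ℝ)) with hfh
    have hfhsm : StronglyMeasurable fh :=
      hf₀sm.comp_measurable
        (measurable_subtype_coe.comp (AddCircle.measurableEquivIco T 0).measurable)
    have hcomp : ∀ t : ℝ, fh (t : AddCircle T) = f₀ (sig T t) := by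
      intro t
      rw [hfh]
      exact congrArg f₀ (AddCircle.coe_equivIco_mk_apply T t)
    have hXmeas : Measurable fun t : ℝ => (‖f₀ t‖₊ : ℝ≥0∞) ^ α :=
      hf₀sm.measurable.nnnorm.coe_nnreal_ennreal.pow_const α
    have hmemf₀ : MemLp f₀ p (muW r) := (Lp.memLp F).ae_eq hff₀
    have hInt : ∫⁻ t, (‖f₀ t‖₊ : ℝ≥0∞) ^ α ∂(muW r) < ⊤ := by
      have h := lintegral_rpow_enorm_lt_top_of_eLpNorm_lt_top hp0 hptop hmemf₀.2
      rwa [hptR] at h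
    have hmemfh : MemLp fh p (volume : Measure (AddCircle T)) := by
      refine ⟨hfhsm.aestronglyMeasurable, ?_⟩
      rw [eLpNorm_eq_lintegral_rpow_enorm_toReal hp0 hptop, hptR]
      refine ENNReal.rpow_lt_top_of_nonneg (by positivity) ?_
      have e1 : ∫⁻ x : AddCircle T, (‖fh x‖₊ : ℝ≥0∞) ^ α =
          ∫⁻ t in Ioc (0:ℝ) (0 + T), (‖fh (t : AddCircle T)‖₊ : ℝ≥0∞) ^ α :=
        (AddCircle.lintegral_preimage T 0 _).symm
      have e2 : ∫⁻ t in Ioc (0:ℝ) (0 + T), (‖fh (t : AddCircle T)‖₊ : ℝ≥0∞) ^ α =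
          ∫⁻ t in Ico (0:ℝ) T, (‖f₀ t‖₊ : ℝ≥0∞) ^ α := by
        rw [zero_add, ← Measure.restrict_congr_set Ico_ae_eq_Ioc]
        refine setLIntegral_congr_fun measurableSet_Ico (fun t ht => ?_)
        rw [hcomp t, sig_eq_self hT ht]
      simp only [enorm_eq_nnnorm]; rw [e1, e2]
      exact ne_of_lt (lt_of_le_of_lt (lintegral_Ico_le hr hT _ hXmeas)
        (ENNReal.mul_lt_top ENNReal.ofReal_lt_top hInt))
    -- choose a continuous approximation on the circle
    set c : ℝ≥0∞ := ENNReal.ofReal (Real.exp (-(r * T))) with hcdef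
    have hc1 : c < 1 := by
      rw [hcdef, ENNReal.ofReal_lt_one]
      rw [Real.exp_lt_one_iff]
      nlinarith
    have hCne : ((1 : ℝ≥0∞) - c)⁻¹ ≠ ⊤ := by
      rw [Ne, ENNReal.inv_eq_top, tsub_eq_zero_iff_le]
      exact fun h => absurd hc1 (not_lt.2 h)
    set D : ℝ≥0∞ := ((1 - c)⁻¹) ^ (1/α) with hDdef
    have hDne : D ≠ ⊤ := ENNReal.rpow_ne_top_of_nonneg (by positivity) hCne
    have hD1ne0 : D + 1 ≠ 0 := by simp
    have hD1ne : D + 1 ≠ ⊤ := by simp [hDne]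
    set δ : ℝ≥0∞ := ENNReal.ofReal (ε/2) / (D + 1) with hδdef
    have hδ0 : δ ≠ 0 := by
      rw [hδdef, Ne, ENNReal.div_eq_zero_iff, ENNReal.ofReal_eq_zero]
      push_neg
      exact ⟨by linarith, hD1ne⟩
    obtain ⟨g₁, hgnorm, hgmem⟩ := hmemfh.exists_boundedContinuous_eLpNorm_sub_le hptop hδ0
    set g : ℝ → EuclideanSpace ℝ (Fin n) := fun t => g₁ (t : AddCircle T) with hgdef
    have hgc : Continuous g := g₁.continuous.comp (AddCircle.continuous_mk' T)
    have hgp : Function.Periodic g T := by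
      intro t
      simp only [hgdef]
      congr 1
      exact AddCircle.coe_add_period T t
    have hgb : MemLp g p (muW r) :=
      MemLp.of_bound hgc.aestronglyMeasurable ‖g₁‖ (ae_of_all _ fun t => g₁.norm_coe_le_norm _)
    -- the key estimate
    have hψm : Measurable fun x : AddCircle T => (‖fh x - g₁ x‖₊ : ℝ≥0∞) ^ α :=
      ((hfhsm.sub g₁.continuous.stronglyMeasurable).measurable.nnnorm.coe_nnreal_ennreal).pow_const α
    have key := lintegral_comp_mk_le hr hT (fun x => (‖fh x - g₁ x‖₊ : ℝ≥0∞) ^ α) hψm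
    have heq : (F : ℝ → EuclideanSpace ℝ (Fin n)) - g =ᵐ[muW r]
        fun t => fh (t : AddCircle T) - g₁ (t : AddCircle T) := by
      have hfoldμ : f₀ =ᵐ[muW r] fun t => f₀ (sig T t) := hfold.filter_mono (muW_ac r).ae_le
      filter_upwards [hff₀, hfoldμ] with t h1 h2
      simp only [Pi.sub_apply]
      rw [h1, h2, ← hcomp t]
    have hfg : eLpNorm ((F : ℝ → EuclideanSpace ℝ (Fin n)) - g) p (muW r) ≤ D * δ := by
      rw [eLpNorm_congr_ae heq, eLpNorm_eq_lintegral_rpow_enorm_toReal hp0 hptop, hptR]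
      calc (∫⁻ t, (‖fh (t : AddCircle T) - g₁ (t : AddCircle T)‖₊ : ℝ≥0∞) ^ α ∂(muW r)) ^ (1/α)
          ≤ ((1 - c)⁻¹ * ∫⁻ x, (‖fh x - g₁ x‖₊ : ℝ≥0∞) ^ α) ^ (1/α) :=
            ENNReal.rpow_le_rpow key (by positivity)
        _ = D * (∫⁻ x, (‖fh x - g₁ x‖₊ : ℝ≥0∞) ^ α) ^ (1/α) :=
            ENNReal.mul_rpow_of_nonneg _ _ (by positivity)
        _ = D * eLpNorm (fh - ⇑g₁) p volume := by
            rw [eLpNorm_eq_lintegral_rpow_enorm_toReal hp0 hptop, hptR]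
            simp only [Pi.sub_apply, enorm_eq_nnnorm]
        _ ≤ D * δ := mul_le_mul_right hgnorm _
    have hfg2 : eLpNorm ((F : ℝ → EuclideanSpace ℝ (Fin n)) - g) p (muW r) ≤
        ENNReal.ofReal (ε/2) := by
      refine le_trans hfg ?_
      calc D * δ ≤ (D + 1) * δ := mul_le_mul_left le_self_add _
        _ = ENNReal.ofReal (ε/2) := by
          rw [hδdef, ENNReal.mul_div_cancel hD1ne0 hD1ne]
    refine ⟨hgb.toLp g, ⟨g, hgc, hgp, hgb.coeFn_toLp⟩, ?_⟩
    rw [Lp.dist_def]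
    have hcoe : eLpNorm (⇑F - ⇑(hgb.toLp g)) p (muW r) =
        eLpNorm ((F : ℝ → EuclideanSpace ℝ (Fin n)) - g) p (muW r) :=
      eLpNorm_congr_ae (EventuallyEq.rfl.sub hgb.coeFn_toLp)
    rw [hcoe]
    calc (eLpNorm ((F : ℝ → EuclideanSpace ℝ (Fin n)) - g) p (muW r)).toReal
        ≤ (ENNReal.ofReal (ε/2)).toReal := ENNReal.toReal_mono ENNReal.ofReal_ne_top hfg2
      _ = ε/2 := ENNReal.toReal_ofReal (by positivity)
      _ < ε := by linarith
end

section
/- Let r > 0, T > 0, α ∈ [1, ∞) and n ∈ ℕ*. The T-periodic extension operator E_T is a continuous linear map from L^α([0,T), μ_r; ℝⁿ) to P̄_T^α(ℝ₊, μ_r; ℝⁿ), and for every f ∈ L^α([0,T), μ_r; ℝⁿ) one has the exact norm identity ‖E_T(f)‖_{L^α(ℝ₊, μ_r; ℝⁿ)} = (1/(1 − e^{−rT}))^{1/α} ‖f‖_{L^α([0,T), μ_r; ℝⁿ)}. -/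
open MeasureTheory Real Set
open scoped ENNReal NNReal

/-- The `T`-periodic extension operator: `E_T(f)(t) = f(t - kT)` for `t ∈ [kT, (k+1)T)`. -/
noncomputable def perExt {G : Type*} (T : ℝ) (f : ℝ → G) : ℝ → G :=
  fun t => f (t - ⌊t / T⌋ * T)

section Aux

variable {r T : ℝ}

private lemma phi_mem (hT : 0 < T) (t : ℝ) : t - ⌊t / T⌋ * T ∈ Set.Ico 0 T :=
  ⟨Int.sub_floor_div_mul_nonneg t hT, Int.sub_floor_div_mul_lt t hT⟩

private lemma floor_shift (hT : 0 < T) {s : ℝ} (hs : s ∈ Set.Ico 0 T) (k : ℤ) :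
    ⌊(s + k * T) / T⌋ = k := by
  rw [add_div, mul_div_assoc, div_self hT.ne', mul_one, Int.floor_add_intCast,
    Int.floor_eq_zero_iff.2 ⟨div_nonneg hs.1 hT.le, (div_lt_one hT).2 hs.2⟩, zero_add]

private lemma phi_shift (hT : 0 < T) {s : ℝ} (hs : s ∈ Set.Ico 0 T) (k : ℤ) :
    (s + k * T) - ⌊(s + k * T) / T⌋ * T = s := by
  rw [floor_shift hT hs k]; ring

private lemma phi_measurable (T : ℝ) : Measurable fun t : ℝ => t - ⌊t / T⌋ * T := by
  apply measurable_id.sub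
  exact ((measurable_of_countable (fun k : ℤ => (k : ℝ))).comp
    (Int.measurable_floor.comp (measurable_id.div_const T))).mul_const T

private lemma Ici_eq_iUnion (hT : 0 < T) :
    Set.Ici (0 : ℝ) = ⋃ k : ℕ, Set.Ico ((k : ℝ) * T) (((k : ℝ) + 1) * T) := by
  ext t
  simp only [Set.mem_Ici, Set.mem_iUnion, Set.mem_Ico]
  constructor
  · intro ht
    have h0 : (0 : ℤ) ≤ ⌊t / T⌋ := Int.floor_nonneg.2 (div_nonneg ht hT.le)
    have hcast : ((⌊t / T⌋.toNat : ℕ) : ℝ) = ((⌊t / T⌋ : ℤ) : ℝ) := by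
      exact_mod_cast congrArg (Int.cast : ℤ → ℝ) (Int.toNat_of_nonneg h0)
    refine ⟨⌊t / T⌋.toNat, ?_, ?_⟩
    · rw [← le_div_iff₀ hT, hcast]
      exact Int.floor_le (t / T)
    · rw [← div_lt_iff₀ hT, hcast]
      exact_mod_cast Int.lt_floor_add_one (t / T)
  · rintro ⟨k, hk, -⟩
    have : (0 : ℝ) ≤ (k : ℝ) * T := by positivity
    linarith

private lemma Ico_pairwise_disjoint (hT : 0 < T) :
    Pairwise (Function.onFun Disjoint
      fun k : ℕ => Set.Ico ((k : ℝ) * T) (((k : ℝ) + 1) * T)) := by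
  have key : ∀ i j : ℕ, i < j →
      Disjoint (Set.Ico ((i : ℝ) * T) (((i : ℝ) + 1) * T))
        (Set.Ico ((j : ℝ) * T) (((j : ℝ) + 1) * T)) := by
    intro i j hij
    refine Set.Ico_disjoint_Ico.2 ?_
    have h1 : ((i : ℝ) + 1) * T ≤ (j : ℝ) * T := by
      have : ((i : ℝ) + 1) ≤ (j : ℝ) := by exact_mod_cast hij
      nlinarith
    exact le_trans (min_le_left _ _) (le_trans h1 (le_max_right _ _))
  intro i j hij
  rcases hij.lt_or_gt with h | h
  · exact key i j h
  · exact (key j i h).symm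


private lemma lintegral_Ico_shift (H : ℝ → ℝ≥0∞) (a b c : ℝ) :
    ∫⁻ t in Set.Ico (a + c) (b + c), H t ∂(volume : Measure ℝ) =
      ∫⁻ s in Set.Ico a b, H (s + c) ∂(volume : Measure ℝ) := by
  rw [← lintegral_indicator measurableSet_Ico, ← lintegral_indicator measurableSet_Ico,
    ← lintegral_add_right_eq_self (fun t => (Set.Ico (a + c) (b + c)).indicator H t) c]
  congr 1
  funext s
  by_cases hs : s ∈ Set.Ico a b
  · have : s + c ∈ Set.Ico (a + c) (b + c) := ⟨by linarith [hs.1], by linarith [hs.2]⟩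
    simp [Set.indicator_of_mem this, Set.indicator_of_mem hs]
  · have : s + c ∉ Set.Ico (a + c) (b + c) := by
      simp only [Set.mem_Ico, not_and_or, not_le, not_lt] at hs ⊢
      rcases hs with h | h
      · exact Or.inl (by linarith)
      · exact Or.inr (by linarith)
    simp [Set.indicator_of_notMem this, Set.indicator_of_notMem hs]

private lemma muW_lintegral_phi (hr : 0 < r) (hT : 0 < T) (G : ℝ → ℝ≥0∞) :
    ∫⁻ t, G (t - ⌊t / T⌋ * T) ∂(muW r) =
      (1 - ENNReal.ofReal (Real.exp (-r * T)))⁻¹ *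
        ∫⁻ t, G t ∂((muW r).restrict (Set.Ico 0 T)) := by
  set e : ℝ → ℝ≥0∞ := fun t => ENNReal.ofReal (Real.exp (-r * t)) with he
  have emeas : Measurable e := by
    exact (Real.measurable_exp.comp (measurable_id.const_mul (-r))).ennreal_ofReal
  have hwd : ∀ (s : Set ℝ), MeasurableSet s → ∀ h : ℝ → ℝ≥0∞,
      ∫⁻ t, h t ∂((volume.withDensity e).restrict s) = ∫⁻ t in s, e t * h t ∂volume := by
    intro s hs h
    rw [restrict_withDensity hs,
      lintegral_withDensity_eq_lintegral_mul_non_measurable _ emeas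
        (Filter.Eventually.of_forall fun t => ENNReal.ofReal_lt_top)]
    rfl
  have hmuW : muW r = (volume.withDensity e).restrict (Set.Ici 0) := rfl
  have hres : (muW r).restrict (Set.Ico 0 T) = (volume.withDensity e).restrict (Set.Ico 0 T) := by
    rw [hmuW, Measure.restrict_restrict measurableSet_Ico,
      Set.inter_eq_left.2 (fun x hx => hx.1)]
  set q : ℝ≥0∞ := ENNReal.ofReal (Real.exp (-r * T)) with hq
  set J : ℝ≥0∞ := ∫⁻ s in Set.Ico 0 T, e s * G s ∂volume with hJ
  have hterm : ∀ k : ℕ,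
      ∫⁻ t in Set.Ico ((k : ℝ) * T) (((k : ℝ) + 1) * T), e t * G (t - ⌊t / T⌋ * T) ∂volume
        = q ^ k * J := by
    intro k
    have h1 : Set.Ico ((k : ℝ) * T) (((k : ℝ) + 1) * T)
        = Set.Ico (0 + (k : ℝ) * T) (T + (k : ℝ) * T) := by
      congr 1 <;> ring
    rw [h1, lintegral_Ico_shift]
    have h2 : ∫⁻ s in Set.Ico (0:ℝ) T,
        e (s + (k : ℝ) * T) * G (s + (k : ℝ) * T - ⌊(s + (k : ℝ) * T) / T⌋ * T) ∂volume
        = ∫⁻ s in Set.Ico (0:ℝ) T, q ^ k * (e s * G s) ∂volume := by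
      apply setLIntegral_congr_fun measurableSet_Ico
      intro s hs
      have hk : ((k : ℤ) : ℝ) = (k : ℝ) := by push_cast; ring
      have hphi : s + (k : ℝ) * T - ⌊(s + (k : ℝ) * T) / T⌋ * T = s := by
        have := phi_shift hT hs (k : ℤ)
        rwa [hk] at this
      simp only []
      rw [hphi]
      have hexp : Real.exp (-r * (s + (k : ℝ) * T))
          = Real.exp (-r * s) * Real.exp (-r * T) ^ k := by
        rw [← Real.exp_nat_mul, ← Real.exp_add]
        congr 1
        ring
      have : e (s + (k : ℝ) * T) = e s * q ^ k := by
        rw [he, hq]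
        simp only []
        rw [hexp, ENNReal.ofReal_mul (Real.exp_nonneg _), ENNReal.ofReal_pow (Real.exp_nonneg _)]
      rw [this]
      ring
    rw [h2, lintegral_const_mul' _ _ (ENNReal.pow_ne_top ENNReal.ofReal_ne_top)]
  calc ∫⁻ t, G (t - ⌊t / T⌋ * T) ∂(muW r)
      = ∫⁻ t in Set.Ici (0:ℝ), e t * G (t - ⌊t / T⌋ * T) ∂volume := by
        rw [hmuW, hwd _ measurableSet_Ici]
    _ = ∑' k : ℕ, ∫⁻ t in Set.Ico ((k : ℝ) * T) (((k : ℝ) + 1) * T),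
          e t * G (t - ⌊t / T⌋ * T) ∂volume := by
        rw [Ici_eq_iUnion hT, lintegral_iUnion (fun k => measurableSet_Ico)
          (Ico_pairwise_disjoint hT)]
    _ = ∑' k : ℕ, q ^ k * J := by simp only [hterm]
    _ = (1 - q)⁻¹ * J := by rw [ENNReal.tsum_mul_right, ENNReal.tsum_geometric]
    _ = (1 - q)⁻¹ * ∫⁻ t, G t ∂((muW r).restrict (Set.Ico 0 T)) := by
        rw [hres, hwd _ measurableSet_Ico]
end Aux

/-- `E_T` is a continuous linear map from `L^α([0,T), μ_r; ℝⁿ)` into the closure of the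
continuous `T`-periodic functions in `L^α(ℝ₊, μ_r; ℝⁿ)`, with the exact norm identity
`‖E_T f‖ = (1/(1-e^{-rT}))^{1/α} ‖f‖`. -/
theorem perExt_continuous_linear
    (r T α : ℝ) (hr : 0 < r) (hT : 0 < T) (hα : 1 ≤ α) (n : ℕ) (hn : 0 < n) :
    (∀ f g : ℝ → EuclideanSpace ℝ (Fin n), perExt T (f + g) = perExt T f + perExt T g) ∧
    (∀ (c : ℝ) (f : ℝ → EuclideanSpace ℝ (Fin n)), perExt T (c • f) = c • perExt T f) ∧
    (∀ f : ℝ → EuclideanSpace ℝ (Fin n),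
      MemLp f (ENNReal.ofReal α) ((muW r).restrict (Set.Ico 0 T)) →
      (MemLp (perExt T f) (ENNReal.ofReal α) (muW r) ∧
        (∀ᵐ t ∂(volume.restrict (Set.Ici (0:ℝ))), perExt T f (t + T) = perExt T f t) ∧
        eLpNorm (perExt T f) (ENNReal.ofReal α) (muW r) =
          ENNReal.ofReal ((1 / (1 - Real.exp (-r * T))) ^ (1 / α)) *
            eLpNorm f (ENNReal.ofReal α) ((muW r).restrict (Set.Ico 0 T)))) := by
  refine ⟨fun f g => rfl, fun c f => rfl, ?_⟩
  intro f hf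
  have hα0 : (0 : ℝ) < α := lt_of_lt_of_le one_pos hα
  set p : ℝ≥0∞ := ENNReal.ofReal α with hp
  have hp0 : p ≠ 0 := by
    simp only [hp, ne_eq, ENNReal.ofReal_eq_zero, not_le]
    exact hα0
  have hptop : p ≠ ∞ := ENNReal.ofReal_ne_top
  have hpreal : p.toReal = α := ENNReal.toReal_ofReal hα0.le
  set q : ℝ≥0∞ := ENNReal.ofReal (Real.exp (-r * T)) with hq
  set J : ℝ≥0∞ := ∫⁻ t, ‖f t‖ₑ ^ α ∂((muW r).restrict (Set.Ico 0 T)) with hJ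
  -- norm identity
  have key : ∫⁻ x, ‖perExt T f x‖ₑ ^ α ∂(muW r) = (1 - q)⁻¹ * J :=
    muW_lintegral_phi hr hT (fun s => ‖f s‖ₑ ^ α)
  have hx0 : (0 : ℝ) < Real.exp (-r * T) := Real.exp_pos _
  have hx1 : Real.exp (-r * T) < 1 := by
    rw [Real.exp_lt_one_iff]
    exact mul_neg_of_neg_of_pos (neg_neg_of_pos hr) hT
  have h1x : (0 : ℝ) < 1 - Real.exp (-r * T) := by linarith
  have hconst : ENNReal.ofReal ((1 / (1 - Real.exp (-r * T))) ^ (1 / α))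
      = ((1 - q)⁻¹) ^ (1 / α) := by
    rw [one_div (1 - Real.exp (-r * T)),
      ← ENNReal.ofReal_rpow_of_pos (inv_pos.2 h1x),
      ENNReal.ofReal_inv_of_pos h1x, ENNReal.ofReal_sub _ hx0.le, ENNReal.ofReal_one, hq]
  have hnorm : eLpNorm (perExt T f) p (muW r)
      = ENNReal.ofReal ((1 / (1 - Real.exp (-r * T))) ^ (1 / α))
          * eLpNorm f p ((muW r).restrict (Set.Ico 0 T)) := by
    rw [eLpNorm_eq_lintegral_rpow_enorm_toReal hp0 hptop,
      eLpNorm_eq_lintegral_rpow_enorm_toReal hp0 hptop, hpreal, key, ← hJ,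
      ENNReal.mul_rpow_of_nonneg _ _ (by positivity : (0:ℝ) ≤ 1 / α), hconst]
  -- a.e. strong measurability
  obtain ⟨g, hg, hfg⟩ := hf.1
  have emeas : Measurable fun t : ℝ => ENNReal.ofReal (Real.exp (-r * t)) :=
    (Real.measurable_exp.comp (measurable_id.const_mul (-r))).ennreal_ofReal
  have hres : (muW r).restrict (Set.Ico 0 T)
      = (volume.restrict (Set.Ico 0 T)).withDensity
          (fun t => ENNReal.ofReal (Real.exp (-r * t))) := by
    show ((volume.withDensity _).restrict (Set.Ici 0)).restrict (Set.Ico 0 T) = _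
    rw [Measure.restrict_restrict measurableSet_Ico,
      Set.inter_eq_left.2 (fun x hx => hx.1), restrict_withDensity measurableSet_Ico]
  have hac : (volume.restrict (Set.Ico (0:ℝ) T)) ≪ (muW r).restrict (Set.Ico 0 T) := by
    rw [hres]
    exact withDensity_absolutelyContinuous' emeas.aemeasurable
      (Filter.Eventually.of_forall fun t => by
        simp [ENNReal.ofReal_eq_zero, not_le, (Real.exp_pos _)])
  have hfg' : f =ᵐ[volume.restrict (Set.Ico (0:ℝ) T)] g := hfg.filter_mono hac.ae_le
  set N : Set ℝ := toMeasurable (volume.restrict (Set.Ico (0:ℝ) T)) {t | f t ≠ g t} with hN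
  have hNmeas : MeasurableSet N := measurableSet_toMeasurable _ _
  have hN0 : (volume.restrict (Set.Ico (0:ℝ) T)) N = 0 := by
    rw [hN, measure_toMeasurable]
    exact hfg'
  have hM0 : volume (N ∩ Set.Ico (0:ℝ) T) = 0 := by
    rwa [Measure.restrict_apply' measurableSet_Ico] at hN0
  have hsub : {t | perExt T f t ≠ perExt T g t}
      ⊆ ⋃ k : ℤ, (fun t : ℝ => t - (k : ℝ) * T) ⁻¹' (N ∩ Set.Ico 0 T) := by
    intro t ht
    refine Set.mem_iUnion.2 ⟨⌊t / T⌋, ?_, phi_mem hT t⟩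
    exact subset_toMeasurable _ _ (ht : f _ ≠ g _)
  have hvol0 : volume {t | perExt T f t ≠ perExt T g t} = 0 := by
    refine measure_mono_null hsub (measure_iUnion_null fun k => ?_)
    have hfun : (fun t : ℝ => t - (k : ℝ) * T) = fun t : ℝ => t + (-((k : ℝ) * T)) := by
      funext t; ring
    rw [hfun, measure_preimage_add_right]
    exact hM0
  have hmuv : muW r ≪ (volume : Measure ℝ) :=
    (Measure.absolutelyContinuous_of_le Measure.restrict_le_self).trans
      (withDensity_absolutelyContinuous _ _)
  have haeq : perExt T f =ᵐ[muW r] perExt T g := ae_iff.mpr (hmuv hvol0)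
  have haesm : AEStronglyMeasurable (perExt T f) (muW r) :=
    ⟨perExt T g, hg.comp_measurable (phi_measurable T), haeq⟩
  refine ⟨⟨haesm, ?_⟩, ?_, hnorm⟩
  · rw [hnorm]
    exact ENNReal.mul_lt_top ENNReal.ofReal_lt_top hf.2
  · refine Filter.Eventually.of_forall fun t => ?_
    show f (t + T - ⌊(t + T) / T⌋ * T) = f (t - ⌊t / T⌋ * T)
    have hdiv : (t + T) / T = t / T + 1 := by
      field_simp
    rw [hdiv, Int.floor_add_one]
    congr 1
    push_cast
    ring
end

section
/- Let r > 0, T > 0, α ∈ [1, ∞) and n ∈ ℕ*. If g ∈ L^α(ℝ₊, μ_r; ℝⁿ), then for Lebesgue-almost every s ∈ [0,T] the series Σ_{k=0}^∞ e^{−rkT} g(s + kT) converges absolutely in ℝⁿ, the function A(g) belongs to L^α(0,T; ℝⁿ) (with respect to Lebesgue measure), and ‖A(g)‖_{L^α(0,T)} ≤ ((1 − e^{−rT})/e^{−rT})^{1/α} ‖g‖_{L^α(ℝ₊, μ_r)}. Consequently A is a bounded linear operator from L^α(ℝ₊, μ_r; ℝⁿ) into L^α(0,T; ℝⁿ). 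-/
open MeasureTheory Real Set

/-- The averaging operator
`A(g)(s) = (1 - e^{-rT}) Σ_{k=0}^∞ e^{-rkT} g(s + kT)`. -/
noncomputable def avgOp {G : Type*} [NormedAddCommGroup G] [NormedSpace ℝ G]
    (r T : ℝ) (g : ℝ → G) : ℝ → G :=
  fun s => (1 - Real.exp (-r * T)) • ∑' k : ℕ, Real.exp (-(r * k * T)) • g (s + k * T)

open Filter in
open scoped ENNReal NNReal in
lemma tsum_jensen {p : ℝ} (hp : 1 ≤ p) (w a : ℕ → ℝ≥0∞) (hw : ∑' k, w k = 1)
    (hw0 : ∀ k, w k ≠ 0) (hwt : ∀ k, w k ≠ ∞) :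
    (∑' k, w k * a k) ^ p ≤ ∑' k, w k * a k ^ p := by
  rcases eq_or_lt_of_le hp with h1 | h1
  · simp [← h1]
  have hpq : p.HolderConjugate (p / (p - 1)) := (Real.holderConjugate_iff_eq_conjExponent h1).mpr rfl
  set q := p / (p - 1)
  have hf : AEMeasurable (fun k : ℕ => w k ^ (1/p) * a k) Measure.count := .of_discrete
  have hg : AEMeasurable (fun k : ℕ => w k ^ (1/q)) (Measure.count : Measure ℕ) := .of_discrete
  have H := ENNReal.lintegral_mul_le_Lp_mul_Lq Measure.count hpq hf hg
  simp only [lintegral_count] at H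
  have hp0 : (0:ℝ) < p := hpq.pos
  have hq0 : (0:ℝ) < q := hpq.symm.pos
  have e1 : ∀ k, w k ^ (1/p) * a k * w k ^ (1/q) = w k * a k := by
    intro k
    rw [mul_right_comm, ← ENNReal.rpow_add _ _ (hw0 k) (hwt k)]
    rw [show 1/p + 1/q = 1 by rw [one_div, one_div]; exact hpq.inv_add_inv_eq_one]
    rw [ENNReal.rpow_one]
  have e2 : ∀ k, (w k ^ (1/p) * a k) ^ p = w k * a k ^ p := by
    intro k
    rw [ENNReal.mul_rpow_of_nonneg _ _ hp0.le, ← ENNReal.rpow_mul,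
      one_div_mul_cancel hp0.ne', ENNReal.rpow_one]
  have e3 : ∀ k, (w k ^ (1/q) : ℝ≥0∞) ^ q = w k := by
    intro k
    rw [← ENNReal.rpow_mul, one_div_mul_cancel hq0.ne', ENNReal.rpow_one]
  simp only [Pi.mul_apply, e1, e2, e3] at H
  rw [hw, ENNReal.one_rpow, mul_one] at H
  calc (∑' k, w k * a k) ^ p ≤ ((∑' k, w k * a k ^ p) ^ (1/p)) ^ p :=
        ENNReal.rpow_le_rpow H hp0.le
    _ = ∑' k, w k * a k ^ p := by
        rw [← ENNReal.rpow_mul, one_div_mul_cancel hp0.ne', ENNReal.rpow_one]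

open scoped ENNReal NNReal in
lemma muW_eq (r : ℝ) : muW r
    = (volume.restrict (Ici 0)).withDensity (fun t => ENNReal.ofReal (Real.exp (-r * t))) :=
  restrict_withDensity measurableSet_Ici _

open scoped ENNReal NNReal in
lemma dens_meas (r : ℝ) : Measurable (fun t : ℝ => ENNReal.ofReal (Real.exp (-r * t))) :=
  (Real.measurable_exp.comp (measurable_id.const_mul (-r))).ennreal_ofReal

open scoped ENNReal NNReal in
lemma absCont (r : ℝ) : volume.restrict (Ici (0:ℝ)) ≪ muW r := by
  intro s hs
  set t := toMeasurable (muW r) s with ht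
  have hts : s ⊆ t := subset_toMeasurable _ _
  have htm : MeasurableSet t := measurableSet_toMeasurable _ _
  have ht0 : muW r t = 0 := by rw [measure_toMeasurable]; exact hs
  rw [muW_eq, withDensity_apply_eq_zero (dens_meas r)] at ht0
  have : t ⊆ {x | ENNReal.ofReal (Real.exp (-r * x)) ≠ 0} ∩ t := by
    intro x hx
    refine ⟨?_, hx⟩
    simp only [mem_setOf_eq, ne_eq, ENNReal.ofReal_eq_zero, not_le]
    exact Real.exp_pos _
  exact measure_mono_null hts (measure_mono_null this ht0)

open scoped ENNReal NNReal in
lemma iUnion_Ico_nat_mul {T : ℝ} (hT : 0 < T) :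
    (⋃ k : ℕ, Ico ((k:ℝ) * T) (((k:ℝ) + 1) * T)) = Ici 0 := by
  ext x
  simp only [mem_iUnion, mem_Ico, mem_Ici]
  constructor
  · rintro ⟨k, h1, _⟩
    exact le_trans (by positivity) h1
  · intro hx
    refine ⟨⌊x / T⌋₊, ?_, ?_⟩
    · rw [← le_div_iff₀ hT]
      exact Nat.floor_le (by positivity)
    · rw [← div_lt_iff₀ hT]
      exact Nat.lt_floor_add_one _

open scoped ENNReal NNReal in
lemma translate_lintegral (T : ℝ) (k : ℕ) (H : ℝ → ℝ≥0∞) (hH : Measurable H) :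
    ∫⁻ s in Ico (0:ℝ) T, H (s + k * T) ∂volume
      = ∫⁻ u in Ico ((k:ℝ) * T) (((k:ℝ) + 1) * T), H u ∂volume := by
  have mp : MeasurePreserving (fun x : ℝ => x + (k:ℝ) * T) volume volume :=
    measurePreserving_add_right volume _
  have hpre : (fun x : ℝ => x + (k:ℝ) * T) ⁻¹' (Ico ((k:ℝ) * T) (((k:ℝ) + 1) * T))
      = Ico (0:ℝ) T := by
    ext x; simp only [mem_preimage, mem_Ico]; constructor <;> intro h <;>
      constructor <;> nlinarith [h.1, h.2]
  have := (mp.restrict_preimage (s := Ico ((k:ℝ) * T) (((k:ℝ) + 1) * T))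
    measurableSet_Ico).lintegral_comp hH
  rw [hpre] at this
  exact this

open scoped ENNReal NNReal in
lemma key_bound (r T : ℝ) (hr : 0 < r) (hT : 0 < T) {α : ℝ} (hα : 1 ≤ α)
    (F : ℝ → ℝ≥0∞) (hF : Measurable F) :
    ∫⁻ s in Icc (0:ℝ) T,
        (∑' k : ℕ, ENNReal.ofReal ((1 - Real.exp (-r*T)) * Real.exp (-r*T) ^ k)
          * F (s + k * T)) ^ α ∂volume
      ≤ ENNReal.ofReal ((1 - Real.exp (-r*T)) / Real.exp (-r*T))
          * ∫⁻ t in Ici (0:ℝ), ENNReal.ofReal (Real.exp (-r*t)) * F t ^ α ∂volume := by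
  set c := Real.exp (-r*T) with hc
  have hc0 : 0 < c := Real.exp_pos _
  have hc1 : c < 1 := by
    rw [hc]; exact Real.exp_lt_one_iff.mpr (by nlinarith)
  have h1c : 0 < 1 - c := by linarith
  set w : ℕ → ℝ≥0∞ := fun k => ENNReal.ofReal ((1 - c) * c ^ k) with hwdef
  have hw0 : ∀ k, w k ≠ 0 := fun k => by
    simp only [hwdef, ne_eq, ENNReal.ofReal_eq_zero, not_le]; positivity
  have hwt : ∀ k, w k ≠ ∞ := fun k => ENNReal.ofReal_ne_top
  have hsum : Summable (fun k : ℕ => (1 - c) * c ^ k) :=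
    (summable_geometric_of_lt_one hc0.le hc1).mul_left _
  have hw1 : ∑' k, w k = 1 := by
    rw [hwdef, ← ENNReal.ofReal_tsum_of_nonneg (fun k => by positivity) hsum,
      tsum_mul_left, tsum_geometric_of_lt_one hc0.le hc1,
      mul_inv_cancel₀ h1c.ne', ENNReal.ofReal_one]
  have hα0 : (0:ℝ) < α := lt_of_lt_of_le one_pos hα
  -- pointwise Jensen
  have step1 : ∀ s : ℝ, (∑' k : ℕ, w k * F (s + k * T)) ^ α
      ≤ ∑' k : ℕ, w k * F (s + k * T) ^ α := fun s =>
    tsum_jensen hα w (fun k => F (s + k * T)) hw1 hw0 hwt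
  have hFk : ∀ k : ℕ, Measurable fun s : ℝ => F (s + k * T) := fun k =>
    hF.comp (measurable_add_const _)
  calc ∫⁻ s in Icc (0:ℝ) T, (∑' k : ℕ, w k * F (s + k * T)) ^ α ∂volume
      ≤ ∫⁻ s in Icc (0:ℝ) T, ∑' k : ℕ, w k * F (s + k * T) ^ α ∂volume :=
        lintegral_mono fun s => step1 s
    _ = ∫⁻ s in Ico (0:ℝ) T, ∑' k : ℕ, w k * F (s + k * T) ^ α ∂volume := by
        rw [Measure.restrict_congr_set Ico_ae_eq_Icc]
    _ = ∑' k : ℕ, ∫⁻ s in Ico (0:ℝ) T, w k * F (s + k * T) ^ α ∂volume :=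
        lintegral_tsum fun k =>
          ((((hFk k).pow measurable_const)).const_mul (w k)).aemeasurable
    _ = ∑' k : ℕ, w k * ∫⁻ u in Ico ((k:ℝ) * T) (((k:ℝ) + 1) * T), F u ^ α ∂volume := by
        refine tsum_congr fun k => ?_
        rw [lintegral_const_mul _ ((hFk k).pow measurable_const),
          translate_lintegral T k (fun u => F u ^ α) (hF.pow measurable_const)]
    _ ≤ ∑' k : ℕ, ENNReal.ofReal ((1 - c) / c)
          * ∫⁻ u in Ico ((k:ℝ) * T) (((k:ℝ) + 1) * T),
              ENNReal.ofReal (Real.exp (-r*u)) * F u ^ α ∂volume := by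
        refine ENNReal.tsum_le_tsum fun k => ?_
        have hgm : Measurable fun u : ℝ => ENNReal.ofReal (Real.exp (-r*u)) * F u ^ α :=
          (Measurable.ennreal_ofReal (by fun_prop)).mul (hF.pow measurable_const)
        rw [← lintegral_const_mul _ (hF.pow measurable_const),
          ← lintegral_const_mul _ hgm]
        refine setLIntegral_mono' measurableSet_Ico fun u hu => ?_
        rw [← mul_assoc]
        refine mul_le_mul_left ?_ _
        rw [hwdef, ← ENNReal.ofReal_mul (by positivity)]
        refine ENNReal.ofReal_le_ofReal ?_
        have hck : c ^ (k+1) ≤ Real.exp (-r*u) := by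
          rw [hc, ← Real.exp_nat_mul]
          refine Real.exp_le_exp.mpr ?_
          have := hu.2
          push_cast
          nlinarith [hu.2]
        calc (1 - c) * c ^ k = (1 - c) / c * c ^ (k+1) := by
              field_simp; ring
          _ ≤ (1 - c) / c * Real.exp (-r*u) :=
              mul_le_mul_of_nonneg_left hck (by positivity)
    _ = ENNReal.ofReal ((1 - c) / c)
          * ∑' k : ℕ, ∫⁻ u in Ico ((k:ℝ) * T) (((k:ℝ) + 1) * T),
              ENNReal.ofReal (Real.exp (-r*u)) * F u ^ α ∂volume := ENNReal.tsum_mul_left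
    _ = ENNReal.ofReal ((1 - c) / c)
          * ∫⁻ t in Ici (0:ℝ), ENNReal.ofReal (Real.exp (-r*t)) * F t ^ α ∂volume := by
        congr 1
        rw [← iUnion_Ico_nat_mul hT, lintegral_iUnion (fun k => measurableSet_Ico) ?_]
        intro i j hij
        rcases hij.lt_or_gt with h | h
        · refine Set.Ico_disjoint_Ico.mpr ?_
          refine le_trans (min_le_left _ _) (le_trans ?_ (le_max_right _ _))
          have : (i:ℝ) + 1 ≤ (j:ℝ) := by exact_mod_cast Nat.succ_le_of_lt h
          nlinarith
        · refine Set.Ico_disjoint_Ico.mpr ?_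
          refine le_trans (min_le_right _ _) (le_trans ?_ (le_max_left _ _))
          have : (j:ℝ) + 1 ≤ (i:ℝ) := by exact_mod_cast Nat.succ_le_of_lt h
          nlinarith

open scoped ENNReal NNReal in
lemma ae_translates {G : Type*} [NormedAddCommGroup G] (r T : ℝ) (hT : 0 < T)
    {g g' : ℝ → G} (h : g =ᵐ[muW r] g') :
    ∀ᵐ s ∂(volume.restrict (Icc (0:ℝ) T)), ∀ k : ℕ, g (s + k * T) = g' (s + k * T) := by
  have h2 : g =ᵐ[volume.restrict (Ici (0:ℝ))] g' := (absCont r).ae_eq h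
  rw [ae_all_iff]
  intro k
  have hN : volume.restrict (Ici (0:ℝ)) {x | g x ≠ g' x} = 0 := h2
  set N := toMeasurable (volume.restrict (Ici (0:ℝ))) {x | g x ≠ g' x} with hNdef
  have hNm : MeasurableSet N := measurableSet_toMeasurable _ _
  have hN0 : volume (N ∩ Ici (0:ℝ)) = 0 := by
    rw [← Measure.restrict_apply' measurableSet_Ici, measure_toMeasurable]
    exact hN
  have hsub : {s : ℝ | ¬ g (s + k * T) = g' (s + k * T)} ∩ Icc 0 T
      ⊆ (fun x : ℝ => x + k * T) ⁻¹' (N ∩ Ici 0) := by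
    rintro s ⟨hs1, hs2⟩
    refine ⟨subset_toMeasurable _ _ hs1, ?_⟩
    have : (0:ℝ) ≤ k * T := by positivity
    exact add_nonneg hs2.1 this
  rw [ae_iff, Measure.restrict_apply' measurableSet_Icc]
  refine measure_mono_null hsub ?_
  rw [(measurePreserving_add_right volume ((k:ℝ) * T)).measure_preimage
    (hNm.inter measurableSet_Ici).nullMeasurableSet]
  exact hN0

open Filter in
open scoped ENNReal NNReal in
lemma master {G : Type*} [NormedAddCommGroup G] [NormedSpace ℝ G] [CompleteSpace G]
    (r T α : ℝ) (hr : 0 < r) (hT : 0 < T) (hα : 1 ≤ α)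
    (g : ℝ → G) (hg : MemLp g (ENNReal.ofReal α) (muW r)) :
    (∀ᵐ s ∂(volume.restrict (Set.Icc (0:ℝ) T)),
        Summable fun k : ℕ => Real.exp (-(r * k * T)) * ‖g (s + k * T)‖) ∧
      MemLp (avgOp r T g) (ENNReal.ofReal α) (volume.restrict (Set.Icc (0:ℝ) T)) ∧
      eLpNorm (avgOp r T g) (ENNReal.ofReal α) (volume.restrict (Set.Icc (0:ℝ) T)) ≤
        ENNReal.ofReal (((1 - Real.exp (-r * T)) / Real.exp (-r * T)) ^ (1 / α)) *
          eLpNorm g (ENNReal.ofReal α) (muW r) := by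
  have hα0 : (0:ℝ) < α := lt_of_lt_of_le one_pos hα
  set c : ℝ := Real.exp (-r * T) with hc
  have hc0 : 0 < c := Real.exp_pos _
  have hc1 : c < 1 := by rw [hc]; exact Real.exp_lt_one_iff.mpr (by nlinarith)
  have h1c : 0 < 1 - c := by linarith
  set p : ℝ≥0∞ := ENNReal.ofReal α with hp
  have hp0 : p ≠ 0 := by simp [hp, ENNReal.ofReal_eq_zero]; linarith
  have hpt : p ≠ ∞ := ENNReal.ofReal_ne_top
  have hpR : p.toReal = α := ENNReal.toReal_ofReal hα0.le
  have hexp : ∀ k : ℕ, Real.exp (-(r * k * T)) = c ^ k := by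
    intro k
    rw [hc, ← Real.exp_nat_mul]
    ring_nf
  -- measurable representative
  set g' : ℝ → G := hg.1.mk g with hg'def
  have hg'sm : StronglyMeasurable g' := hg.1.stronglyMeasurable_mk
  have hgg' : g =ᵐ[muW r] g' := hg.1.ae_eq_mk
  set F : ℝ → ℝ≥0∞ := fun t => (‖g' t‖₊ : ℝ≥0∞) with hFdef
  have hF : Measurable F := hg'sm.enorm
  set B : ℝ≥0∞ := eLpNorm g p (muW r) with hB
  have hBfin : B < ∞ := hg.2
  -- identify ∫ e^{-rt} F^α with B^α
  have hI : ∫⁻ t in Ici (0:ℝ), ENNReal.ofReal (Real.exp (-r*t)) * F t ^ α ∂volume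
      = B ^ α := by
    have h1 : B = eLpNorm g' p (muW r) := eLpNorm_congr_ae hgg'
    rw [h1, eLpNorm_eq_lintegral_rpow_enorm_toReal hp0 hpt, hpR, ← ENNReal.rpow_mul,
      one_div, inv_mul_cancel₀ hα0.ne', ENNReal.rpow_one, muW_eq,
      lintegral_withDensity_eq_lintegral_mul _ (dens_meas r)
        (g := fun x => ‖g' x‖ₑ ^ α) (hF.pow measurable_const)]
    rfl
  -- the ENNReal series
  set S : ℝ → ℝ≥0∞ := fun s => ∑' k : ℕ, ENNReal.ofReal (c ^ k) * F (s + k * T) with hSdef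
  have hSmeas : Measurable S :=
    Measurable.ennreal_tsum fun k => (hF.comp (measurable_add_const _)).const_mul _
  have hfactor : ∀ s : ℝ,
      (∑' k : ℕ, ENNReal.ofReal ((1 - c) * c ^ k) * F (s + k * T))
        = ENNReal.ofReal (1 - c) * S s := by
    intro s
    rw [hSdef, ← ENNReal.tsum_mul_left]
    refine tsum_congr fun k => ?_
    rw [ENNReal.ofReal_mul h1c.le, mul_assoc]
  have hJ : ∫⁻ s in Icc (0:ℝ) T, (ENNReal.ofReal (1 - c) * S s) ^ α ∂volume
      ≤ ENNReal.ofReal ((1 - c) / c) * B ^ α := by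
    rw [← hI]
    have := key_bound r T hr hT hα F hF
    rw [show (fun s => (∑' k : ℕ, ENNReal.ofReal ((1 - c) * c ^ k) * F (s + k * T)) ^ α)
        = fun s => (ENNReal.ofReal (1 - c) * S s) ^ α from funext fun s => by rw [hfactor]]
      at this
    exact this
  have hJfin : ENNReal.ofReal ((1 - c) / c) * B ^ α ≠ ∞ :=
    (ENNReal.mul_lt_top ENNReal.ofReal_lt_top
      (ENNReal.rpow_lt_top_of_nonneg hα0.le hBfin.ne)).ne
  -- a.e. finiteness of S
  have hSfin : ∀ᵐ s ∂(volume.restrict (Icc (0:ℝ) T)), S s < ∞ := by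
    have hmeas : Measurable fun s => (ENNReal.ofReal (1 - c) * S s) ^ α :=
      (hSmeas.const_mul _).pow measurable_const
    have := ae_lt_top hmeas (ne_top_of_le_ne_top hJfin hJ)
    filter_upwards [this] with s hs
    by_contra hS
    push_neg at hS
    rw [top_le_iff] at hS
    rw [hS, ENNReal.mul_top (by simp [ENNReal.ofReal_eq_zero]; linarith),
      ENNReal.top_rpow_of_pos hα0] at hs
    exact absurd hs (lt_irrefl _)
  -- good set
  have hgood : ∀ᵐ s ∂(volume.restrict (Icc (0:ℝ) T)),
      (∀ k : ℕ, g (s + k * T) = g' (s + k * T)) ∧ S s < ∞ :=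
    (ae_translates r T hT hgg').and hSfin
  -- summability on the good set
  have hsummable : ∀ s : ℝ, (∀ k : ℕ, g (s + k * T) = g' (s + k * T)) → S s < ∞ →
      Summable fun k : ℕ => Real.exp (-(r * k * T)) * ‖g (s + k * T)‖ := by
    intro s hks hSs
    have h1 : Summable fun k : ℕ =>
        (ENNReal.ofReal (c ^ k) * F (s + k * T)).toReal :=
      ENNReal.summable_toReal hSs.ne
    refine h1.congr fun k => ?_
    rw [hks k, hexp k]
    show (ENNReal.ofReal (c ^ k) * (‖g' (s + k * T)‖₊ : ℝ≥0∞)).toReal = _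
    rw [ENNReal.toReal_mul, ENNReal.toReal_ofReal (by positivity), ENNReal.coe_toReal,
      coe_nnnorm]
  -- pointwise bound on the norm of avgOp
  have hptwise : ∀ s : ℝ, (∀ k : ℕ, g (s + k * T) = g' (s + k * T)) → S s < ∞ →
      (‖avgOp r T g s‖₊ : ℝ≥0∞) ≤ ENNReal.ofReal (1 - c) * S s := by
    intro s hks hSs
    have hsum := hsummable s hks hSs
    have hnorm : ∀ k : ℕ, ‖Real.exp (-(r * k * T)) • g (s + k * T)‖
        = Real.exp (-(r * k * T)) * ‖g (s + k * T)‖ := by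
      intro k
      rw [norm_smul, Real.norm_eq_abs, abs_of_pos (Real.exp_pos _)]
    have hsum' : Summable fun k : ℕ => ‖Real.exp (-(r * k * T)) • g (s + k * T)‖ :=
      hsum.congr fun k => (hnorm k).symm
    have hsumnn : Summable fun k : ℕ => ‖Real.exp (-(r * k * T)) • g (s + k * T)‖₊ :=
      NNReal.summable_coe.mp (hsum'.congr fun k => rfl)
    have h1 : (‖avgOp r T g s‖₊ : ℝ≥0∞)
        = ENNReal.ofReal (1 - c)
          * (‖∑' k : ℕ, Real.exp (-(r * k * T)) • g (s + k * T)‖₊ : ℝ≥0∞) := by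
      rw [avgOp, nnnorm_smul, ENNReal.coe_mul]
      exact congrArg (· * _) (Real.enorm_eq_ofReal h1c.le)
    rw [h1]
    refine mul_le_mul_right ?_ _
    calc (‖∑' k : ℕ, Real.exp (-(r * k * T)) • g (s + k * T)‖₊ : ℝ≥0∞)
        ≤ ((∑' k : ℕ, ‖Real.exp (-(r * k * T)) • g (s + k * T)‖₊ : ℝ≥0) : ℝ≥0∞) :=
          ENNReal.coe_le_coe.mpr (nnnorm_tsum_le hsumnn)
      _ = ∑' k : ℕ, (‖Real.exp (-(r * k * T)) • g (s + k * T)‖₊ : ℝ≥0∞) :=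
          ENNReal.coe_tsum hsumnn
      _ = S s := by
          refine tsum_congr fun k => ?_
          show ((‖Real.exp (-(r * k * T)) • g (s + k * T)‖₊ : ℝ≥0) : ℝ≥0∞)
            = ENNReal.ofReal (c ^ k) * (‖g' (s + k * T)‖₊ : ℝ≥0∞)
          rw [← ENNReal.ofReal_coe_nnreal, coe_nnnorm, hnorm k, hks k, hexp k,
            ENNReal.ofReal_mul (by positivity), ← coe_nnnorm, ENNReal.ofReal_coe_nnreal]
  -- a.e. strong measurability of avgOp g
  have haesm : AEStronglyMeasurable (avgOp r T g) (volume.restrict (Icc (0:ℝ) T)) := by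
    refine aestronglyMeasurable_of_tendsto_ae Filter.atTop
      (f := fun N : ℕ => fun s : ℝ =>
        (1 - c) • ∑ k ∈ Finset.range N, Real.exp (-(r * k * T)) • g' (s + k * T)) ?_ ?_
    · intro N
      have hsm : StronglyMeasurable (fun s : ℝ =>
          ∑ k ∈ Finset.range N, Real.exp (-(r * k * T)) • g' (s + k * T)) :=
        Finset.stronglyMeasurable_fun_sum _ fun k _ =>
          (hg'sm.comp_measurable (measurable_add_const _)).const_smul _
      exact (hsm.const_smul _).aestronglyMeasurable
    · filter_upwards [hgood] with s hs
      obtain ⟨hks, hSs⟩ := hs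
      have hsum := hsummable s hks hSs
      have hsumG : Summable fun k : ℕ => Real.exp (-(r * k * T)) • g (s + k * T) := by
        refine Summable.of_norm (hsum.congr fun k => ?_)
        rw [norm_smul, Real.norm_eq_abs, abs_of_pos (Real.exp_pos _)]
      have ht := hsumG.hasSum.tendsto_sum_nat
      have ht2 := Filter.Tendsto.const_smul (M := ℝ) ht (1 - c)
      refine Filter.Tendsto.congr (fun N => ?_) ht2
      refine congrArg _ (Finset.sum_congr rfl fun k _ => ?_)
      rw [hks k]
  -- the eLpNorm bound
  have hbound : eLpNorm (avgOp r T g) p (volume.restrict (Icc (0:ℝ) T)) ≤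
      ENNReal.ofReal (((1 - c) / c) ^ (1 / α)) * B := by
    rw [eLpNorm_eq_lintegral_rpow_enorm_toReal hp0 hpt, hpR]
    have hmono : ∫⁻ s in Icc (0:ℝ) T, (‖avgOp r T g s‖₊ : ℝ≥0∞) ^ α ∂volume
        ≤ ∫⁻ s in Icc (0:ℝ) T, (ENNReal.ofReal (1 - c) * S s) ^ α ∂volume := by
      refine lintegral_mono_ae ?_
      filter_upwards [hgood] with s hs
      exact ENNReal.rpow_le_rpow (hptwise s hs.1 hs.2) hα0.le
    calc (∫⁻ s in Icc (0:ℝ) T, (‖avgOp r T g s‖₊ : ℝ≥0∞) ^ α ∂volume) ^ (1/α)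
        ≤ (ENNReal.ofReal ((1 - c) / c) * B ^ α) ^ (1/α) :=
          ENNReal.rpow_le_rpow (le_trans hmono hJ) (by positivity)
      _ = ENNReal.ofReal (((1 - c) / c) ^ (1 / α)) * B := by
          rw [ENNReal.mul_rpow_of_nonneg _ _ (by positivity), ← ENNReal.rpow_mul,
            mul_one_div, div_self hα0.ne', ENNReal.rpow_one,
            ENNReal.ofReal_rpow_of_pos (by positivity)]
  refine ⟨?_, ⟨haesm, ?_⟩, hbound⟩
  · filter_upwards [hgood] with s hs
    exact hsummable s hs.1 hs.2
  · exact lt_of_le_of_lt hbound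
      (ENNReal.mul_lt_top ENNReal.ofReal_lt_top hBfin)

lemma summable_smul_of_summable_norm {G : Type*} [NormedAddCommGroup G] [NormedSpace ℝ G]
    [CompleteSpace G] {r T : ℝ} {g : ℝ → G} {s : ℝ}
    (h : Summable fun k : ℕ => Real.exp (-(r * k * T)) * ‖g (s + k * T)‖) :
    Summable fun k : ℕ => Real.exp (-(r * k * T)) • g (s + k * T) := by
  refine Summable.of_norm (h.congr fun k => ?_)
  rw [norm_smul, Real.norm_eq_abs, abs_of_pos (Real.exp_pos _)]

/-- If `g ∈ L^α(ℝ₊, μ_r; ℝⁿ)`, then for a.e. `s ∈ [0,T]` the series defining `A(g)(s)`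
converges absolutely, `A(g) ∈ L^α(0,T;ℝⁿ)`, and
`‖A(g)‖_{L^α(0,T)} ≤ ((1-e^{-rT})/e^{-rT})^{1/α} ‖g‖_{L^α(ℝ₊,μ_r)}`.
Moreover `A` is (a.e.) additive and homogeneous, hence a bounded linear operator. -/
theorem avgOp_bounded_linear
    (r T α : ℝ) (hr : 0 < r) (hT : 0 < T) (hα : 1 ≤ α) (n : ℕ) (hn : 0 < n) :
    (∀ g : ℝ → EuclideanSpace ℝ (Fin n), MemLp g (ENNReal.ofReal α) (muW r) →
      ((∀ᵐ s ∂(volume.restrict (Set.Icc (0:ℝ) T)),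
          Summable fun k : ℕ => Real.exp (-(r * k * T)) * ‖g (s + k * T)‖) ∧
        MemLp (avgOp r T g) (ENNReal.ofReal α) (volume.restrict (Set.Icc (0:ℝ) T)) ∧
        eLpNorm (avgOp r T g) (ENNReal.ofReal α) (volume.restrict (Set.Icc (0:ℝ) T)) ≤
          ENNReal.ofReal (((1 - Real.exp (-r * T)) / Real.exp (-r * T)) ^ (1 / α)) *
            eLpNorm g (ENNReal.ofReal α) (muW r))) ∧
    -- linearity (almost everywhere on `[0,T]`) :
    (∀ g h : ℝ → EuclideanSpace ℝ (Fin n),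
      MemLp g (ENNReal.ofReal α) (muW r) → MemLp h (ENNReal.ofReal α) (muW r) →
      ∀ᵐ s ∂(volume.restrict (Set.Icc (0:ℝ) T)),
        avgOp r T (g + h) s = avgOp r T g s + avgOp r T h s) ∧
    (∀ (c : ℝ) (g : ℝ → EuclideanSpace ℝ (Fin n)),
      MemLp g (ENNReal.ofReal α) (muW r) →
      ∀ᵐ s ∂(volume.restrict (Set.Icc (0:ℝ) T)),
        avgOp r T (c • g) s = c • avgOp r T g s) := by
  refine ⟨fun g hg => master r T α hr hT hα g hg, ?_, ?_⟩
  · intro g h hg hh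
    filter_upwards [(master r T α hr hT hα g hg).1, (master r T α hr hT hα h hh).1]
      with s hsg hsh
    have hgs := summable_smul_of_summable_norm hsg
    have hhs := summable_smul_of_summable_norm hsh
    have e1 : ∀ k : ℕ, Real.exp (-(r * k * T)) • (g + h) (s + k * T)
        = Real.exp (-(r * k * T)) • g (s + k * T)
          + Real.exp (-(r * k * T)) • h (s + k * T) := fun k => by
      simp [Pi.add_apply, smul_add]
    show (1 - Real.exp (-r * T)) • ∑' k : ℕ, Real.exp (-(r * k * T)) • (g + h) (s + k * T) = _
    rw [tsum_congr e1, Summable.tsum_add hgs hhs, smul_add]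
    rfl
  · intro c' g hg
    filter_upwards [(master r T α hr hT hα g hg).1] with s hsg
    have hgs := summable_smul_of_summable_norm hsg
    have e1 : ∀ k : ℕ, Real.exp (-(r * k * T)) • (c' • g) (s + k * T)
        = c' • (Real.exp (-(r * k * T)) • g (s + k * T)) := fun k => by
      rw [Pi.smul_apply, smul_comm]
    show (1 - Real.exp (-r * T)) • ∑' k : ℕ, Real.exp (-(r * k * T)) • (c' • g) (s + k * T) = _
    rw [tsum_congr e1, Summable.tsum_const_smul c' hgs, smul_comm]
    rfl
end

section
/- Let r > 0, T > 0 and n ∈ ℕ*. For f ∈ L²(ℝ₊, μ_r; ℝⁿ), the following are equivalent: (i) f is orthogonal to the subspace P̄_T²(ℝ₊, μ_r; ℝⁿ) in L²(ℝ₊, μ_r; ℝⁿ); (ii) for Lebesgue-almost every s ∈ [0,T), Σ_{k=0}^∞ e^{−rkT} f(s + kT) = 0. -/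
set_option maxHeartbeats 1000000

open MeasureTheory Real Set RealInnerProductSpace ENNReal NNReal

namespace OP

variable {r T : ℝ} {n : ℕ}

lemma muW_eq (r : ℝ) :
    muW r = (volume.restrict (Ici 0)).withDensity (fun t => ENNReal.ofReal (exp (-r * t))) := by
  rw [muW, restrict_withDensity measurableSet_Ici]

lemma w_meas (r : ℝ) : Measurable (fun t : ℝ => ENNReal.ofReal (exp (-r * t))) := by
  fun_prop

lemma restrict_ac : volume.restrict (Ici (0:ℝ)) ≪ muW r := by
  refine Measure.AbsolutelyContinuous.mk fun s hs h0 => ?_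
  rw [muW_eq, withDensity_apply _ hs, lintegral_eq_zero_iff (w_meas r)] at h0
  have h1 : ((volume.restrict (Ici (0:ℝ))).restrict s)
      {t : ℝ | ENNReal.ofReal (exp (-r * t)) ≠ 0} = 0 := by
    simpa [Filter.EventuallyEq, ae_iff] using h0
  have h2 : {t : ℝ | ENNReal.ofReal (exp (-r * t)) ≠ 0} = univ := by
    ext t
    simp only [mem_setOf_eq, mem_univ, iff_true]
    exact (ENNReal.ofReal_pos.mpr (exp_pos _)).ne'
  rw [h2] at h1
  rwa [Measure.restrict_apply_univ] at h1

lemma muW_finite (hr : 0 < r) : IsFiniteMeasure (muW r) := by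
  constructor
  have hint : IntegrableOn (fun t => exp (-r * t)) (Ici (0:ℝ)) volume := by
    have h := exp_neg_integrableOn_Ioi 0 hr
    rwa [← integrableOn_Ici_iff_integrableOn_Ioi] at h
  rw [muW_eq r, withDensity_apply _ MeasurableSet.univ, Measure.restrict_univ]
  rw [← ofReal_integral_eq_lintegral_ofReal hint (ae_of_all _ fun t => (exp_pos _).le)]
  exact ENNReal.ofReal_lt_top

lemma hgeo (hr : 0 < r) (hT : 0 < T) : Summable (fun k : ℕ => exp (-(r * k * T))) := by
  have h : (fun k : ℕ => exp (-(r * k * T))) = fun k : ℕ => exp ((k : ℝ) * (-(r * T))) := by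
    funext k; congr 1; ring
  rw [h]
  exact Real.summable_exp_nat_mul_iff.mpr (by nlinarith)

lemma hgeoE (hr : 0 < r) (hT : 0 < T) :
    ∑' k : ℕ, ENNReal.ofReal (exp (-(r * k * T))) ≠ ∞ := by
  rw [← ENNReal.ofReal_tsum_of_nonneg (fun k => (exp_pos _).le) (hgeo hr hT)]
  exact ENNReal.ofReal_ne_top

lemma ae_shift (hT : 0 < T) {N : Set ℝ} (hN : volume N = 0) :
    ∀ᵐ s ∂(volume.restrict (Ico (0:ℝ) T)), ∀ k : ℕ, s + k * T ∉ N := by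
  refine ae_restrict_of_ae ?_
  rw [ae_iff]
  have hsub : {s : ℝ | ¬ ∀ k : ℕ, s + k * T ∉ N} ⊆ ⋃ k : ℕ, (fun s => s + (k:ℝ) * T) ⁻¹' N := by
    intro s hs
    push_neg at hs
    obtain ⟨k, hk⟩ := hs
    exact mem_iUnion.2 ⟨k, hk⟩
  refine measure_mono_null hsub ?_
  rw [measure_iUnion_null_iff]
  intro k
  rw [measure_preimage_add_right]
  exact hN

lemma Ici_eq (hT : 0 < T) : Ici (0:ℝ) = ⋃ k : ℕ, Ico ((k:ℝ) * T) (((k:ℝ) + 1) * T) := by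
  ext x
  simp only [mem_Ici, mem_iUnion, mem_Ico]
  constructor
  · intro hx
    have h0 : (0:ℤ) ≤ ⌊x / T⌋ := Int.floor_nonneg.mpr (by positivity)
    refine ⟨⌊x / T⌋.toNat, ?_, ?_⟩
    · have hc : ((⌊x / T⌋.toNat : ℕ) : ℝ) = ((⌊x / T⌋ : ℤ) : ℝ) := by
        exact_mod_cast Int.toNat_of_nonneg h0
      have h1 : ((⌊x / T⌋.toNat : ℕ) : ℝ) ≤ x / T := by rw [hc]; exact Int.floor_le _
      have := mul_le_mul_of_nonneg_right h1 hT.le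
      rwa [div_mul_cancel₀ _ hT.ne'] at this
    · have hc : ((⌊x / T⌋.toNat : ℕ) : ℝ) = ((⌊x / T⌋ : ℤ) : ℝ) := by
        exact_mod_cast Int.toNat_of_nonneg h0
      have h1 : x / T < ((⌊x / T⌋.toNat : ℕ) : ℝ) + 1 := by rw [hc]; exact Int.lt_floor_add_one _
      have := mul_lt_mul_of_pos_right h1 hT
      rwa [div_mul_cancel₀ _ hT.ne'] at this
  · rintro ⟨k, h1, h2⟩
    have : (0:ℝ) ≤ (k:ℝ) * T := by positivity
    linarith

lemma pdis (hT : 0 < T) :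
    Pairwise (Function.onFun Disjoint fun k : ℕ => Ico ((k:ℝ) * T) (((k:ℝ) + 1) * T)) := by
  intro i j hij
  refine Set.Ico_disjoint_Ico.mpr ?_
  rcases hij.lt_or_gt with h | h
  · have h' : ((i:ℝ) + 1) ≤ (j:ℝ) := by exact_mod_cast h
    have h2 : ((i:ℝ) + 1) * T ≤ (j:ℝ) * T := by nlinarith
    exact le_trans (min_le_left _ _) (le_trans h2 (le_max_right _ _))
  · have h' : ((j:ℝ) + 1) ≤ (i:ℝ) := by exact_mod_cast h
    have h2 : ((j:ℝ) + 1) * T ≤ (i:ℝ) * T := by nlinarith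
    exact le_trans (min_le_right _ _) (le_trans h2 (le_max_left _ _))

lemma lintegral_unfold (hT : 0 < T) (h : ℝ → ℝ≥0∞) :
    ∫⁻ t in Ici (0:ℝ), h t = ∑' k : ℕ, ∫⁻ s in Ico (0:ℝ) T, h (s + k * T) := by
  rw [Ici_eq hT, lintegral_iUnion (fun k => measurableSet_Ico) (pdis hT)]
  congr 1
  funext k
  have key := (measurePreserving_add_right volume ((k:ℝ) * T)).setLIntegral_comp_preimage_emb
      (measurableEmbedding_addRight _) h (Ico ((k:ℝ)*T) (((k:ℝ)+1)*T))
  have hpre : (fun x : ℝ => x + (k:ℝ)*T) ⁻¹' (Ico ((k:ℝ)*T) (((k:ℝ)+1)*T)) = Ico (0:ℝ) T := by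
    rw [preimage_add_const_Ico]
    congr 1 <;> ring
  rw [← key, hpre]

lemma integral_unfold (hT : 0 < T) {h : ℝ → ℝ} (hi : IntegrableOn h (Ici (0:ℝ)) volume) :
    ∫ t in Ici (0:ℝ), h t = ∑' k : ℕ, ∫ s in Ico (0:ℝ) T, h (s + k * T) := by
  rw [Ici_eq hT] at hi ⊢
  rw [integral_iUnion (fun k => measurableSet_Ico) (pdis hT) hi]
  congr 1
  funext k
  have key := (measurePreserving_add_right volume ((k:ℝ) * T)).setIntegral_preimage_emb
      (measurableEmbedding_addRight _) h (Ico ((k:ℝ)*T) (((k:ℝ)+1)*T))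
  have hpre : (fun x : ℝ => x + (k:ℝ)*T) ⁻¹' (Ico ((k:ℝ)*T) (((k:ℝ)+1)*T)) = Ico (0:ℝ) T := by
    rw [preimage_add_const_Ico]
    congr 1 <;> ring
  rw [← key, hpre]

lemma lint_ne_top {F : ℝ → EuclideanSpace ℝ (Fin n)} (hF : MemLp F 2 (muW r)) :
    ∫⁻ t in Ici (0:ℝ), ENNReal.ofReal (exp (-r * t) * ‖F t‖ ^ 2) ∂volume ≠ ∞ := by
  have hi : Integrable (fun t => ‖F t‖ ^ (2:ℝ)) (muW r) :=
    hF.integrable_norm_rpow two_ne_zero ENNReal.ofNat_ne_top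
  have hfin := hi.2
  rw [hasFiniteIntegral_iff_norm] at hfin
  have h1 : ∫⁻ t, ENNReal.ofReal (‖F t‖ ^ 2) ∂(muW r) ≠ ∞ := by
    refine ne_of_lt (lt_of_le_of_lt (le_of_eq (lintegral_congr fun t => ?_)) hfin)
    rw [norm_of_nonneg (by positivity)]
    norm_num [Real.rpow_natCast]
  have hgm : AEMeasurable (fun t => ENNReal.ofReal (‖F t‖ ^ 2)) (muW r) :=
    (hF.1.norm.aemeasurable.pow_const 2).ennreal_ofReal
  rw [muW_eq r, lintegral_withDensity_eq_lintegral_mul₀' (by fun_prop)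
    (by rw [← muW_eq r]; exact hgm)] at h1
  refine ne_of_lt (lt_of_le_of_lt (le_of_eq (lintegral_congr fun t => ?_)) h1.lt_top)
  simp only [Pi.mul_apply]
  rw [ENNReal.ofReal_mul (exp_nonneg _)]

lemma G_ne_top (hr : 0 < r) (hT : 0 < T) {F : ℝ → EuclideanSpace ℝ (Fin n)}
    (hFm : StronglyMeasurable F) (hF : MemLp F 2 (muW r)) :
    ∫⁻ s in Ico (0:ℝ) T,
      (∑' k : ℕ, ENNReal.ofReal (exp (-(r * k * T)) * ‖F (s + k * T)‖ ^ 2)) ∂volume ≠ ∞ := by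
  have hmeas : ∀ k : ℕ, Measurable
      (fun s : ℝ => ENNReal.ofReal (exp (-(r * k * T)) * ‖F (s + k * T)‖ ^ 2)) := by
    intro k
    exact (((hFm.measurable.comp (measurable_add_const ((k:ℝ) * T))).norm.pow_const 2).const_mul
      _).ennreal_ofReal
  rw [lintegral_tsum (fun k => (hmeas k).aemeasurable)]
  have hle : ∀ k : ℕ,
      (∫⁻ s in Ico (0:ℝ) T, ENNReal.ofReal (exp (-(r * k * T)) * ‖F (s + k * T)‖ ^ 2) ∂volume)
      ≤ ENNReal.ofReal (exp (r * T)) *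
        ∫⁻ s in Ico (0:ℝ) T,
          ENNReal.ofReal (exp (-r * (s + k * T)) * ‖F (s + k * T)‖ ^ 2) ∂volume := by
    intro k
    have hm2 : Measurable
        (fun s : ℝ => ENNReal.ofReal (exp (-r * (s + k * T)) * ‖F (s + k * T)‖ ^ 2)) := by
      have hFk : Measurable (fun s : ℝ => F (s + k * T)) :=
        hFm.measurable.comp (measurable_add_const ((k:ℝ) * T))
      exact ((((measurable_id.add_const ((k:ℝ)*T)).const_mul (-r)).exp).mul
        (hFk.norm.pow_const 2)).ennreal_ofReal
    rw [← lintegral_const_mul _ hm2]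
    refine setLIntegral_mono (hm2.const_mul _) fun s hs => ?_
    rw [← ENNReal.ofReal_mul (exp_nonneg _)]
    refine ENNReal.ofReal_le_ofReal ?_
    have hb : exp (-(r * k * T)) ≤ exp (r * T) * exp (-r * (s + k * T)) := by
      rw [← exp_add]
      refine exp_le_exp.mpr ?_
      have h1 := hs.1; have h2 := hs.2
      nlinarith
    calc exp (-(r * k * T)) * ‖F (s + k * T)‖ ^ 2
        ≤ (exp (r * T) * exp (-r * (s + k * T))) * ‖F (s + k * T)‖ ^ 2 :=
          mul_le_mul_of_nonneg_right hb (sq_nonneg _)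
      _ = exp (r * T) * (exp (-r * (s + k * T)) * ‖F (s + k * T)‖ ^ 2) := by ring
  refine ne_of_lt (lt_of_le_of_lt (ENNReal.tsum_le_tsum hle) ?_)
  rw [ENNReal.tsum_mul_left,
    ← lintegral_unfold hT (fun t => ENNReal.ofReal (exp (-r * t) * ‖F t‖ ^ 2))]
  exact ENNReal.mul_lt_top ENNReal.ofReal_lt_top (lint_ne_top hF).lt_top

lemma pt_facts (hr : 0 < r) (hT : 0 < T) {F : ℝ → EuclideanSpace ℝ (Fin n)} {s : ℝ}
    (h : (∑' k : ℕ, ENNReal.ofReal (exp (-(r * k * T)) * ‖F (s + k * T)‖ ^ 2)) ≠ ∞) :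
    Summable (fun k : ℕ => exp (-(r * k * T)) * ‖F (s + k * T)‖) ∧
    Summable (fun k : ℕ => exp (-(r * k * T)) • F (s + k * T)) ∧
    ‖∑' k : ℕ, exp (-(r * k * T)) • F (s + k * T)‖ ≤
      (∑' k : ℕ, exp (-(r * k * T))) +
        (∑' k : ℕ, ENNReal.ofReal (exp (-(r * k * T)) * ‖F (s + k * T)‖ ^ 2)).toReal := by
  have hsq : Summable (fun k : ℕ => exp (-(r * k * T)) * ‖F (s + k * T)‖ ^ 2) := by
    have h2 := ENNReal.summable_toReal h
    refine h2.congr fun k => ?_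
    rw [ENNReal.toReal_ofReal (by positivity)]
  have hg := hgeo hr hT
  have hAM : ∀ k : ℕ, exp (-(r * k * T)) * ‖F (s + k * T)‖ ≤
      exp (-(r * k * T)) + exp (-(r * k * T)) * ‖F (s + k * T)‖ ^ 2 := by
    intro k
    nlinarith [exp_pos (-(r * k * T)), norm_nonneg (F (s + k * T)),
      sq_nonneg (‖F (s + k * T)‖ - 1)]
  have hnorm : Summable (fun k : ℕ => exp (-(r * k * T)) * ‖F (s + k * T)‖) :=
    Summable.of_nonneg_of_le (fun k => by positivity) hAM (hg.add hsq)
  have hnn : ∀ k : ℕ, ‖exp (-(r * k * T)) • F (s + k * T)‖ =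
      exp (-(r * k * T)) * ‖F (s + k * T)‖ := fun k => by
    rw [norm_smul, Real.norm_eq_abs, abs_of_pos (exp_pos _)]
  have hsmul : Summable (fun k : ℕ => exp (-(r * k * T)) • F (s + k * T)) :=
    Summable.of_norm (hnorm.congr fun k => (hnn k).symm)
  refine ⟨hnorm, hsmul, ?_⟩
  calc ‖∑' k : ℕ, exp (-(r * k * T)) • F (s + k * T)‖
      ≤ ∑' k : ℕ, ‖exp (-(r * k * T)) • F (s + k * T)‖ := by
        refine norm_tsum_le_tsum_norm ?_
        exact hnorm.congr fun k => (hnn k).symm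
    _ = ∑' k : ℕ, exp (-(r * k * T)) * ‖F (s + k * T)‖ := tsum_congr fun k => hnn k
    _ ≤ ∑' k : ℕ, (exp (-(r * k * T)) + exp (-(r * k * T)) * ‖F (s + k * T)‖ ^ 2) :=
        Summable.tsum_le_tsum hAM hnorm (hg.add hsq)
    _ = (∑' k : ℕ, exp (-(r * k * T))) + ∑' k : ℕ, exp (-(r * k * T)) * ‖F (s + k * T)‖ ^ 2 :=
        Summable.tsum_add hg hsq
    _ ≤ _ := by
        refine add_le_add le_rfl (le_of_eq ?_)
        rw [ENNReal.tsum_toReal_eq fun k => ENNReal.ofReal_ne_top]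
        exact tsum_congr fun k => (ENNReal.toReal_ofReal (by positivity)).symm

lemma key (hr : 0 < r) (hT : 0 < T) {F q : ℝ → EuclideanSpace ℝ (Fin n)}
    (hFm : StronglyMeasurable F) (hF : MemLp F 2 (muW r)) (hq : MemLp q 2 (muW r))
    (hper : ∀ᵐ s ∂(volume.restrict (Ico (0:ℝ) T)), ∀ k : ℕ, q (s + k * T) = q s) :
    ∫ t, ⟪F t, q t⟫ ∂(muW r) =
      ∫ s in Ico (0:ℝ) T,
        exp (-r * s) * ⟪∑' k : ℕ, exp (-(r * k * T)) • F (s + k * T), q s⟫ := by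
  classical
  have hinner : Integrable (fun t => ⟪F t, q t⟫) (muW r) := by
    have h1 := MeasureTheory.L2.integrable_inner (𝕜 := ℝ) (hF.toLp F) (hq.toLp q)
    refine h1.congr ?_
    filter_upwards [hF.coeFn_toLp, hq.coeFn_toLp] with t h2 h3
    rw [h2, h3]
  have hwm : Measurable (fun t : ℝ => Real.toNNReal (exp (-r * t))) := by fun_prop
  have hd : muW r = (volume.restrict (Ici (0:ℝ))).withDensity
      (fun t => ((Real.toNNReal (exp (-r * t)) : ℝ≥0) : ℝ≥0∞)) := muW_eq r
  have hptw : ∀ (t : ℝ) (y : ℝ), (Real.toNNReal (exp (-r * t)) : ℝ≥0) • y = exp (-r * t) * y := by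
    intro t y
    rw [NNReal.smul_def, Real.coe_toNNReal _ (exp_nonneg _), smul_eq_mul]
  have hint1 : IntegrableOn (fun t => exp (-r * t) * ⟪F t, q t⟫) (Ici (0:ℝ)) volume := by
    have h0 : Integrable (fun t => (Real.toNNReal (exp (-r * t)) : ℝ≥0) • ⟪F t, q t⟫)
        (volume.restrict (Ici (0:ℝ))) := by
      refine (integrable_withDensity_iff_integrable_smul hwm).mp ?_
      rw [← hd]; exact hinner
    exact h0.congr (ae_of_all _ fun t => hptw t _)
  have heq1 : ∫ t, ⟪F t, q t⟫ ∂(muW r)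
      = ∫ t in Ici (0:ℝ), exp (-r * t) * ⟪F t, q t⟫ := by
    rw [hd, integral_withDensity_eq_integral_smul hwm]
    exact integral_congr_ae (ae_of_all _ fun t => hptw t _)
  rw [heq1, integral_unfold hT hint1]
  have hra : volume.restrict (Ico (0:ℝ) T) ≪ muW r :=
    (Measure.absolutelyContinuous_of_le
      (Measure.restrict_mono Ico_subset_Ici_self le_rfl)).trans restrict_ac
  have hqa : AEStronglyMeasurable q (volume.restrict (Ico (0:ℝ) T)) := hq.1.mono_ac hra
  set u : ℕ → ℝ → ℝ := fun k s => exp (-r * (s + k * T)) * ⟪F (s + k * T), q s⟫ with hu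
  have hum : ∀ k, AEStronglyMeasurable (u k) (volume.restrict (Ico (0:ℝ) T)) := by
    intro k
    refine AEStronglyMeasurable.mul ?_ ?_
    · exact (continuous_exp.comp
        (continuous_const.mul (continuous_id.add continuous_const))).aestronglyMeasurable
    · exact (hFm.comp_measurable (measurable_add_const _)).aestronglyMeasurable.inner hqa
  have hterm : ∀ k : ℕ,
      (∫ s in Ico (0:ℝ) T, exp (-r * (s + k * T)) * ⟪F (s + k * T), q (s + k * T)⟫) =
      ∫ s in Ico (0:ℝ) T, u k s :=
    fun k => integral_congr_ae (hper.mono fun s hs => by simp only [hu]; rw [hs k])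
  have hbound : ∀ (k : ℕ) (s : ℝ), (‖u k s‖₊ : ℝ≥0∞) ≤
      ENNReal.ofReal (exp (-r * (s + k * T)) * ‖F (s + k * T)‖ ^ 2)
      + ENNReal.ofReal (exp (-r * (s + k * T)) * ‖q s‖ ^ 2) := by
    intro k s
    rw [show ((‖u k s‖₊ : ℝ≥0∞)) = ‖u k s‖ₑ from rfl, Real.enorm_eq_ofReal_abs, ← ENNReal.ofReal_add (by positivity) (by positivity)]
    refine ENNReal.ofReal_le_ofReal ?_
    simp only [hu]
    rw [abs_mul, abs_of_pos (exp_pos _)]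
    have h1 : |⟪F (s + (k:ℝ) * T), q s⟫| ≤ ‖F (s + (k:ℝ) * T)‖ * ‖q s‖ :=
      abs_real_inner_le_norm _ _
    have h2 := mul_le_mul_of_nonneg_left h1 (exp_pos (-r * (s + (k:ℝ) * T))).le
    nlinarith [sq_nonneg (‖F (s + (k:ℝ) * T)‖ - ‖q s‖), exp_pos (-r * (s + (k:ℝ) * T)),
      norm_nonneg (F (s + (k:ℝ) * T)), norm_nonneg (q s)]
  have hg1m : ∀ k : ℕ, Measurable
      (fun s : ℝ => ENNReal.ofReal (exp (-r * (s + k * T)) * ‖F (s + k * T)‖ ^ 2)) := by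
    intro k
    have hFk : Measurable (fun s : ℝ => F (s + k * T)) :=
      hFm.measurable.comp (measurable_add_const _)
    exact ((((measurable_id.add_const ((k:ℝ)*T)).const_mul (-r)).exp).mul
      (hFk.norm.pow_const 2)).ennreal_ofReal
  have hA : (∑' k : ℕ, ∫⁻ s in Ico (0:ℝ) T,
      ENNReal.ofReal (exp (-r * (s + k * T)) * ‖F (s + k * T)‖ ^ 2) ∂volume) ≠ ⊤ := by
    rw [← lintegral_unfold hT (fun t => ENNReal.ofReal (exp (-r * t) * ‖F t‖ ^ 2))]
    exact lint_ne_top hF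
  have hB : (∑' k : ℕ, ∫⁻ s in Ico (0:ℝ) T,
      ENNReal.ofReal (exp (-r * (s + k * T)) * ‖q s‖ ^ 2) ∂volume) ≠ ⊤ := by
    have hsplit : ∀ (k : ℕ) (s : ℝ), ENNReal.ofReal (exp (-r * (s + k * T)) * ‖q s‖ ^ 2)
        = ENNReal.ofReal (exp (-(r * k * T))) * ENNReal.ofReal (exp (-r * s) * ‖q s‖ ^ 2) := by
      intro k s
      rw [← ENNReal.ofReal_mul (exp_nonneg _)]
      congr 1
      rw [← mul_assoc, ← exp_add]
      congr 2
      ring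
    have hstep : (∑' k : ℕ, ∫⁻ s in Ico (0:ℝ) T,
        ENNReal.ofReal (exp (-r * (s + k * T)) * ‖q s‖ ^ 2) ∂volume)
        = (∑' k : ℕ, ENNReal.ofReal (exp (-(r * k * T)))) *
          ∫⁻ s in Ico (0:ℝ) T, ENNReal.ofReal (exp (-r * s) * ‖q s‖ ^ 2) ∂volume := by
      rw [← ENNReal.tsum_mul_right]
      refine tsum_congr fun k => ?_
      rw [← lintegral_const_mul' _ _ ENNReal.ofReal_ne_top]
      exact lintegral_congr fun s => hsplit k s
    rw [hstep]
    refine ENNReal.mul_ne_top (hgeoE hr hT) ?_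
    refine ne_of_lt (lt_of_le_of_lt (lintegral_mono_set Ico_subset_Ici_self) ?_)
    exact (lint_ne_top hq).lt_top
  have hsum : (∑' k : ℕ, ∫⁻ s in Ico (0:ℝ) T, (‖u k s‖₊ : ℝ≥0∞) ∂volume) ≠ ⊤ := by
    have hstep : ∀ k : ℕ, (∫⁻ s in Ico (0:ℝ) T, (‖u k s‖₊ : ℝ≥0∞) ∂volume) ≤
        (∫⁻ s in Ico (0:ℝ) T,
          ENNReal.ofReal (exp (-r * (s + k * T)) * ‖F (s + k * T)‖ ^ 2) ∂volume)
        + ∫⁻ s in Ico (0:ℝ) T, ENNReal.ofReal (exp (-r * (s + k * T)) * ‖q s‖ ^ 2) ∂volume := by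
      intro k
      rw [← lintegral_add_left (hg1m k)]
      exact lintegral_mono (hbound k)
    refine ne_of_lt (lt_of_le_of_lt (ENNReal.tsum_le_tsum hstep) ?_)
    rw [ENNReal.tsum_add]
    exact ENNReal.add_lt_top.mpr ⟨hA.lt_top, hB.lt_top⟩
  have hGm : Measurable (fun s : ℝ =>
      ∑' k : ℕ, ENNReal.ofReal (exp (-(r * k * T)) * ‖F (s + k * T)‖ ^ 2)) := by
    refine Measurable.ennreal_tsum fun k => ?_
    have hFk : Measurable (fun s : ℝ => F (s + k * T)) :=
      hFm.measurable.comp (measurable_add_const _)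
    exact ((hFk.norm.pow_const 2).const_mul _).ennreal_ofReal
  have hGae : ∀ᵐ s ∂(volume.restrict (Ico (0:ℝ) T)),
      (∑' k : ℕ, ENNReal.ofReal (exp (-(r * k * T)) * ‖F (s + k * T)‖ ^ 2)) ≠ ⊤ :=
    (ae_lt_top hGm (G_ne_top hr hT hFm hF)).mono fun s h => h.ne
  rw [tsum_congr hterm, ← integral_tsum hum hsum]
  refine integral_congr_ae ?_
  filter_upwards [hGae] with s hGs
  obtain ⟨-, hsmul, -⟩ := pt_facts hr hT hGs
  calc (∑' k : ℕ, u k s)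
      = ∑' k : ℕ, exp (-r * s) * ⟪q s, exp (-(r * k * T)) • F (s + k * T)⟫ := by
        refine tsum_congr fun k => ?_
        have he : -r * (s + (k:ℝ) * T) = -r * s + -(r * k * T) := by ring
        simp only [hu]
        rw [real_inner_smul_right, real_inner_comm (F (s + (k:ℝ) * T)) (q s), he, exp_add,
          mul_assoc]
    _ = exp (-r * s) * ∑' k : ℕ, ⟪q s, exp (-(r * k * T)) • F (s + k * T)⟫ := tsum_mul_left
    _ = exp (-r * s) * ⟪q s, ∑' k : ℕ, exp (-(r * k * T)) • F (s + k * T)⟫ := by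
        congr 1
        exact ((innerSL ℝ (q s)).map_tsum hsmul).symm
    _ = exp (-r * s) * ⟪∑' k : ℕ, exp (-(r * k * T)) • F (s + k * T), q s⟫ := by
        rw [real_inner_comm]

end OP

/-- For `f ∈ L²(ℝ₊,μ_r;ℝⁿ)`, `f` is orthogonal to the `L²`-closure of the continuous
`T`-periodic functions (i.e. to the a.e. `T`-periodic elements of `L²`) if and only if
for a.e. `s ∈ [0,T)` one has `Σ_{k=0}^∞ e^{-rkT} f(s + kT) = 0`. -/
theorem orthogonal_to_periodic_iff
    (r T : ℝ) (hr : 0 < r) (hT : 0 < T) (n : ℕ) (hn : 0 < n)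
    (f : ℝ → EuclideanSpace ℝ (Fin n)) (hf : MemLp f 2 (muW r)) :
    (∀ q : ℝ → EuclideanSpace ℝ (Fin n), MemLp q 2 (muW r) →
        (∀ᵐ t ∂(volume.restrict (Set.Ici (0:ℝ))), q (t + T) = q t) →
        ∫ t, ⟪f t, q t⟫ ∂(muW r) = 0) ↔
      (∀ᵐ s ∂(volume.restrict (Set.Ico (0:ℝ) T)),
        ∑' k : ℕ, Real.exp (-(r * k * T)) • f (s + k * T) = 0) := by
  classical
  haveI : IsFiniteMeasure (muW r) := OP.muW_finite hr
  haveI hfin2 : IsFiniteMeasure (volume.restrict (Ico (0:ℝ) T)) :=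
    ⟨by rw [Measure.restrict_apply_univ]; simp [Real.volume_Ico]⟩
  have hFsm := hf.1
  set F : ℝ → EuclideanSpace ℝ (Fin n) := hFsm.mk f with hFdef
  have hFm : StronglyMeasurable F := hFsm.stronglyMeasurable_mk
  have hfF : f =ᵐ[muW r] F := hFsm.ae_eq_mk
  have hF2 : MemLp F 2 (muW r) := hf.ae_eq hfF
  have hfF' : f =ᵐ[volume.restrict (Ici (0:ℝ))] F := hfF.filter_mono OP.restrict_ac.ae_le
  have hnull : volume ({t : ℝ | ¬ f t = F t} ∩ Ici 0) = 0 := by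
    have h := ae_iff.mp hfF'
    rwa [Measure.restrict_apply' measurableSet_Ici] at h
  obtain ⟨N0, hN0sub, hN0m, hN0⟩ := exists_measurable_superset_of_null hnull
  have hswap : ∀ᵐ s ∂(volume.restrict (Ico (0:ℝ) T)),
      ∀ k : ℕ, f (s + k * T) = F (s + k * T) := by
    filter_upwards [OP.ae_shift hT hN0, ae_restrict_mem measurableSet_Ico] with s hs hsI k
    by_contra hne
    exact (hs k) (hN0sub ⟨hne, mem_Ici.mpr (add_nonneg hsI.1 (by positivity))⟩)
  have hRHS : (∀ᵐ s ∂(volume.restrict (Set.Ico (0:ℝ) T)),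
        ∑' k : ℕ, Real.exp (-(r * k * T)) • f (s + k * T) = 0) ↔
      (∀ᵐ s ∂(volume.restrict (Set.Ico (0:ℝ) T)),
        ∑' k : ℕ, Real.exp (-(r * k * T)) • F (s + k * T) = 0) := by
    constructor
    · intro h
      filter_upwards [h, hswap] with s h1 h2
      calc ∑' k : ℕ, Real.exp (-(r * k * T)) • F (s + k * T)
          = ∑' k : ℕ, Real.exp (-(r * k * T)) • f (s + k * T) :=
            tsum_congr fun k => by rw [h2 k]
        _ = 0 := h1
    · intro h
      filter_upwards [h, hswap] with s h1 h2
      calc ∑' k : ℕ, Real.exp (-(r * k * T)) • f (s + k * T)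
          = ∑' k : ℕ, Real.exp (-(r * k * T)) • F (s + k * T) :=
            tsum_congr fun k => by rw [(h2 k).symm]
        _ = 0 := h1
  rw [hRHS]
  constructor
  · -- forward direction
    intro H
    have hGm : Measurable (fun s : ℝ =>
        ∑' k : ℕ, ENNReal.ofReal (exp (-(r * k * T)) * ‖F (s + k * T)‖ ^ 2)) := by
      refine Measurable.ennreal_tsum fun k => ?_
      have hFk : Measurable (fun s : ℝ => F (s + k * T)) :=
        hFm.measurable.comp (measurable_add_const _)
      exact ((hFk.norm.pow_const 2).const_mul _).ennreal_ofReal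
    have hGae : ∀ᵐ s ∂(volume.restrict (Ico (0:ℝ) T)),
        (∑' k : ℕ, ENNReal.ofReal (exp (-(r * k * T)) * ‖F (s + k * T)‖ ^ 2)) ≠ ⊤ :=
      (ae_lt_top hGm (OP.G_ne_top hr hT hFm hF2)).mono fun s h => h.ne
    set g : ℝ → EuclideanSpace ℝ (Fin n) :=
      fun s => ∑' k : ℕ, exp (-(r * k * T)) • F (s + k * T) with hgdef
    have hSm : ∀ m : ℕ, Measurable
        (fun s : ℝ => ∑ k ∈ Finset.range m, exp (-(r * k * T)) • F (s + k * T)) := fun m =>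
      Finset.measurable_sum _ fun k _ =>
        (hFm.measurable.comp (measurable_add_const ((k:ℝ) * T))).const_smul (exp (-(r * k * T)))
    have htend : ∀ᵐ s ∂(volume.restrict (Ico (0:ℝ) T)), Filter.Tendsto
        (fun m : ℕ => ∑ k ∈ Finset.range m, exp (-(r * k * T)) • F (s + k * T))
        Filter.atTop (nhds (g s)) := by
      filter_upwards [hGae] with s hGs
      exact (OP.pt_facts hr hT hGs).2.1.hasSum.tendsto_sum_nat
    have hgaesm : AEStronglyMeasurable g (volume.restrict (Ico (0:ℝ) T)) :=
      aestronglyMeasurable_of_tendsto_ae Filter.atTop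
        (fun m => (hSm m).aestronglyMeasurable) htend
    have hDint : Integrable (fun s : ℝ => (∑' k : ℕ, exp (-(r * k * T))) +
        (∑' k : ℕ, ENNReal.ofReal (exp (-(r * k * T)) * ‖F (s + k * T)‖ ^ 2)).toReal)
        (volume.restrict (Ico (0:ℝ) T)) :=
      (integrable_const _).add
        (integrable_toReal_of_lintegral_ne_top hGm.aemeasurable (OP.G_ne_top hr hT hFm hF2))
    have hgint : Integrable g (volume.restrict (Ico (0:ℝ) T)) := by
      refine hDint.mono' hgaesm ?_
      filter_upwards [hGae] with s hGs
      exact (OP.pt_facts hr hT hGs).2.2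
    have main : ∀ v : EuclideanSpace ℝ (Fin n), ∀ A : Set ℝ, MeasurableSet A →
        ∫ s in A, exp (-r * s) * ⟪g s, v⟫ ∂(volume.restrict (Ico (0:ℝ) T)) = 0 := by
      intro v A hA
      set q : ℝ → EuclideanSpace ℝ (Fin n) :=
        fun t => A.indicator (fun _ => v) (T * Int.fract (t / T)) with hqdef
      have hqm : Measurable q :=
        (measurable_const.indicator hA).comp
          ((measurable_fract.comp (measurable_id.div_const T)).const_mul T)
      have hq2 : MemLp q 2 (muW r) :=
        MemLp.of_bound hqm.stronglyMeasurable.aestronglyMeasurable ‖v‖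
          (ae_of_all _ fun t => norm_indicator_le_norm_self _ _)
      have hρper : ∀ (t : ℝ) (k : ℕ),
          T * Int.fract ((t + k * T) / T) = T * Int.fract (t / T) := by
        intro t k
        have hdiv : (t + k * T) / T = t / T + k := by
          rw [add_div, mul_div_cancel_right₀ _ hT.ne']
        rw [hdiv, Int.fract_add_natCast]
      have hqper : ∀ (t : ℝ) (k : ℕ), q (t + k * T) = q t := fun t k => by
        simp only [hqdef]
        rw [hρper t k]
      have h0 := H q hq2 (ae_of_all _ fun t => by
        have h := hqper t 1
        simpa using h)
      have h0' : ∫ t, ⟪F t, q t⟫ ∂(muW r) = 0 := by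
        rw [← h0]
        exact integral_congr_ae (hfF.mono fun t ht => by simp only [ht])
      rw [OP.key hr hT hFm hF2 hq2 (ae_of_all _ fun s k => hqper s k)] at h0'
      rw [← integral_indicator hA]
      refine Eq.trans (integral_congr_ae ?_) h0'
      filter_upwards [ae_restrict_mem measurableSet_Ico] with s hs
      have hρs : T * Int.fract (s / T) = s := by
        rw [Int.fract_eq_self.mpr ⟨div_nonneg hs.1 hT.le, (div_lt_one hT).mpr hs.2⟩,
          mul_comm, div_mul_cancel₀ _ hT.ne']
      by_cases hsA : s ∈ A
      · simp only [hqdef, hρs, indicator_of_mem hsA, hgdef]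
      · simp only [hqdef, hρs, indicator_of_notMem hsA, inner_zero_right, mul_zero]
    have hInt : ∀ v : EuclideanSpace ℝ (Fin n),
        Integrable (fun s => exp (-r * s) * ⟪g s, v⟫) (volume.restrict (Ico (0:ℝ) T)) := by
      intro v
      refine (hgint.norm.const_mul ‖v‖).mono' ?_ ?_
      · exact ((continuous_exp.comp (continuous_const.mul continuous_id)).aestronglyMeasurable).mul
          (hgaesm.inner aestronglyMeasurable_const)
      · filter_upwards [ae_restrict_mem measurableSet_Ico] with s hs
        have h1 : |⟪g s, v⟫| ≤ ‖g s‖ * ‖v‖ := abs_real_inner_le_norm _ _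
        have h2 : exp (-r * s) ≤ 1 := by
          rw [← exp_zero]
          exact exp_le_exp.mpr (by nlinarith [hs.1])
        rw [Real.norm_eq_abs, abs_mul, abs_of_pos (exp_pos _)]
        calc exp (-r * s) * |⟪g s, v⟫| ≤ 1 * |⟪g s, v⟫| :=
              mul_le_mul_of_nonneg_right h2 (abs_nonneg _)
          _ = |⟪g s, v⟫| := one_mul _
          _ ≤ ‖g s‖ * ‖v‖ := h1
          _ = ‖v‖ * ‖g s‖ := mul_comm _ _
    have hcoord : ∀ i : Fin n, ∀ᵐ s ∂(volume.restrict (Ico (0:ℝ) T)), g s i = 0 := by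
      intro i
      have hz := (hInt (EuclideanSpace.single i (1:ℝ))).ae_eq_zero_of_forall_setIntegral_eq_zero
        (fun A hA _ => main (EuclideanSpace.single i (1:ℝ)) A hA)
      filter_upwards [hz] with s hs
      have h0 : exp (-r * s) * ⟪g s, EuclideanSpace.single i (1:ℝ)⟫ = 0 := hs
      have h1 : ⟪g s, EuclideanSpace.single i (1:ℝ)⟫ = 0 := by
        rcases mul_eq_zero.mp h0 with h | h
        · exact absurd h (exp_ne_zero _)
        · exact h
      rw [EuclideanSpace.inner_single_right] at h1
      simpa using h1
    filter_upwards [ae_all_iff.mpr hcoord] with s h1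
    have hg0 : g s = 0 := by
      apply PiLp.ext
      intro i
      simpa using h1 i
    simpa only [hgdef] using hg0
  · -- backward direction
    intro hg q hq hqper
    set Q : ℝ → EuclideanSpace ℝ (Fin n) := hq.1.mk q with hQdef
    have hQm : StronglyMeasurable Q := hq.1.stronglyMeasurable_mk
    have hqQ : q =ᵐ[muW r] Q := hq.1.ae_eq_mk
    have hQ2 : MemLp Q 2 (muW r) := hq.ae_eq hqQ
    have hqQ' : q =ᵐ[volume.restrict (Ici (0:ℝ))] Q := hqQ.filter_mono OP.restrict_ac.ae_le
    have hnull1 : volume ({t : ℝ | ¬ q t = Q t} ∩ Ici 0) = 0 := by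
      have h := ae_iff.mp hqQ'
      rwa [Measure.restrict_apply' measurableSet_Ici] at h
    obtain ⟨N1, hN1sub, hN1m, hN1⟩ := exists_measurable_superset_of_null hnull1
    have hnull2 : volume ({t : ℝ | ¬ q (t + T) = q t} ∩ Ici 0) = 0 := by
      have h := ae_iff.mp hqper
      rwa [Measure.restrict_apply' measurableSet_Ici] at h
    obtain ⟨N2, hN2sub, hN2m, hN2⟩ := exists_measurable_superset_of_null hnull2
    have hQper : ∀ᵐ s ∂(volume.restrict (Ico (0:ℝ) T)), ∀ k : ℕ, Q (s + k * T) = Q s := by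
      filter_upwards [OP.ae_shift hT (measure_union_null hN1 hN2),
        ae_restrict_mem measurableSet_Ico] with s hs hsI
      have hmem : ∀ k : ℕ, s + k * T ∈ Ici (0:ℝ) := fun k =>
        mem_Ici.mpr (add_nonneg hsI.1 (by positivity))
      have hq' : ∀ k : ℕ, q (s + k * T) = Q (s + k * T) := by
        intro k
        by_contra hne
        exact (hs k) (mem_union_left _ (hN1sub ⟨hne, hmem k⟩))
      have hper' : ∀ k : ℕ, q (s + k * T + T) = q (s + k * T) := by
        intro k
        by_contra hne
        exact (hs k) (mem_union_right _ (hN2sub ⟨hne, hmem k⟩))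
      have hqk : ∀ k : ℕ, q (s + k * T) = q s := by
        intro k
        induction k with
        | zero => norm_num
        | succ m ih =>
          have harg : s + ((m:ℝ) + 1) * T = s + (m:ℝ) * T + T := by ring
          have hcast : (((m + 1 : ℕ)) : ℝ) = (m:ℝ) + 1 := by push_cast; ring
          rw [hcast, harg, hper' m, ih]
      have hq0 : q s = Q s := by
        have h := hq' 0
        simpa using h
      intro k
      rw [← hq' k, hqk k, hq0]
    have hkey := OP.key hr hT hFm hF2 hQ2 hQper
    have heq : ∫ t, ⟪f t, q t⟫ ∂(muW r) = ∫ t, ⟪F t, Q t⟫ ∂(muW r) :=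
      integral_congr_ae (by filter_upwards [hfF, hqQ] with t h1 h2; rw [h1, h2])
    rw [heq, hkey]
    refine integral_eq_zero_of_ae ?_
    filter_upwards [hg] with s h1
    simp [h1]
end

section
/- Let r > 0, T > 0 and n ∈ ℕ*. If f ∈ L²(ℝ₊, μ_r; ℝⁿ) is orthogonal to the subspace P̄_T²(ℝ₊, μ_r; ℝⁿ) in L²(ℝ₊, μ_r; ℝⁿ) and f(t) ≥ 0 (componentwise) for almost every t ∈ ℝ₊, then f = 0 almost everywhere on ℝ₊. -/
open MeasureTheory Real Set RealInnerProductSpace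

/-- If `f ∈ L²(ℝ₊,μ_r;ℝⁿ)` is orthogonal to the `L²`-closure of the continuous
`T`-periodic functions and `f ≥ 0` (componentwise) a.e. on `ℝ₊`, then `f = 0` a.e. -/
theorem orthogonal_nonneg_eq_zero
    (r T : ℝ) (hr : 0 < r) (hT : 0 < T) (n : ℕ) (hn : 0 < n)
    (f : ℝ → EuclideanSpace ℝ (Fin n)) (hf : MemLp f 2 (muW r))
    (horth : ∀ q : ℝ → EuclideanSpace ℝ (Fin n), MemLp q 2 (muW r) →
      (∀ᵐ t ∂(volume.restrict (Set.Ici (0:ℝ))), q (t + T) = q t) →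
      ∫ t, ⟪f t, q t⟫ ∂(muW r) = 0)
    (hpos : ∀ᵐ t ∂(volume.restrict (Set.Ici (0:ℝ))), ∀ i : Fin n, 0 ≤ f t i) :
    ∀ᵐ t ∂(volume.restrict (Set.Ici (0:ℝ))), f t = 0 := by
  classical
  set w : ℝ → ENNReal := fun t => ENNReal.ofReal (Real.exp (-r * t)) with hw
  have hwmeas : Measurable w := by
    exact (Real.measurable_exp.comp (measurable_const.mul measurable_id)).ennreal_ofReal
  set μ₀ := volume.restrict (Set.Ici (0:ℝ)) with hμ₀
  have hμW : muW r = μ₀.withDensity w := by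
    rw [muW, restrict_withDensity measurableSet_Ici]
  -- finiteness of muW r
  have hint : Integrable (fun t => Real.exp (-r * t)) μ₀ := by
    have h1 : IntegrableOn (fun t => Real.exp (-r * t)) (Set.Ioi 0) volume :=
      exp_neg_integrableOn_Ioi 0 hr
    have : Set.Ici (0:ℝ) =ᵐ[volume] Set.Ioi (0:ℝ) := Ioi_ae_eq_Ici.symm
    exact h1.congr_set_ae this
  haveI hfin : IsFiniteMeasure (muW r) := by
    constructor
    rw [hμW, withDensity_apply _ MeasurableSet.univ, setLIntegral_univ]
    exact hint.lintegral_lt_top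
  have hac : muW r ≪ μ₀ := by rw [hμW]; exact withDensity_absolutelyContinuous _ _
  -- for each coordinate, the integral against the constant function is zero
  have key : ∀ i : Fin n, ∀ᵐ t ∂μ₀, f t i = 0 := by
    intro i
    have hq : MemLp (fun _ : ℝ => EuclideanSpace.single i (1:ℝ)) 2 (muW r) :=
      memLp_const _
    have hper : ∀ᵐ t ∂μ₀, (fun _ : ℝ => EuclideanSpace.single i (1:ℝ)) (t + T)
        = (fun _ : ℝ => EuclideanSpace.single i (1:ℝ)) t := by
      filter_upwards with t using rfl
    have hzero := horth _ hq hper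
    have heq : (fun t => ⟪f t, EuclideanSpace.single i (1:ℝ)⟫) = fun t => f t i := by
      funext t
      rw [EuclideanSpace.inner_single_right]
      simp
    rw [heq] at hzero
    -- integrability of the component
    have hfi : Integrable f (muW r) := hf.integrable (by norm_num)
    have hinti : Integrable (fun t => f t i) (muW r) := by
      have := hfi.inner_const (𝕜 := ℝ) (EuclideanSpace.single i (1:ℝ))
      rwa [heq] at this
    -- nonnegativity a.e. wrt muW
    have hposW : 0 ≤ᵐ[muW r] fun t => f t i := by
      filter_upwards [hac.ae_le hpos] with t ht using ht i
    have := (integral_eq_zero_iff_of_nonneg_ae hposW hinti).mp hzero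
    -- transfer back to μ₀
    rw [hμW, Filter.EventuallyEq, ae_withDensity_iff hwmeas] at this
    filter_upwards [this] with t ht
    exact ht (by simp [hw, Real.exp_pos, ne_of_gt, ENNReal.ofReal_pos.mpr (Real.exp_pos _)])
  have : ∀ᵐ t ∂μ₀, ∀ i : Fin n, f t i = 0 := ae_all_iff.mpr key
  filter_upwards [this] with t ht
  ext i
  exact ht i
end

section
/- Let r > 0, T > 0, n ∈ ℕ* and L : ℝ₊ × ℝⁿ × ℝⁿ → ℝ. If L satisfies property (P1), then the averaged Lagrangian A₁(L) is well defined and continuous on [0,T] × ℝⁿ × ℝⁿ. -/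
open MeasureTheory Real Set

/-- The averaged map
`A₁(Φ)(s,x,y) = (1 - e^{-rT}) Σ_{k=0}^∞ e^{-rkT} Φ(s + kT, x, y)` (defined via `tsum`). -/
noncomputable def A1v {G F : Type*} [NormedAddCommGroup F] [NormedSpace ℝ F]
    (r T : ℝ) (Φ : ℝ → G → G → F) : ℝ → G → G → F :=
  fun s x y => (1 - Real.exp (-r * T)) • ∑' k : ℕ, Real.exp (-(r * k * T)) • Φ (s + k * T) x y

/-- Property (P1) : uniform continuity, in the time variable uniformly over `ℝ₊`, near each
fixed `(x,y)`. -/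
def P1Prop {G F : Type*} [NormedAddCommGroup G] [NormedAddCommGroup F]
    (Φ : ℝ → G → G → F) : Prop :=
  ∀ (x y : G), ∀ ε : ℝ, 0 < ε → ∃ δ : ℝ, 0 < δ ∧
    ∀ t ∈ Set.Ici (0:ℝ), ∀ t₁ ∈ Set.Ici (0:ℝ), ∀ x₁ y₁ : G,
      |t - t₁| ≤ δ → ‖x - x₁‖ ≤ δ → ‖y - y₁‖ ≤ δ → ‖Φ t x y - Φ t₁ x₁ y₁‖ ≤ ε

section Aux

variable {G : Type*} [NormedAddCommGroup G]

/-- Linear growth in time from the equi-uniform continuity in time. -/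
lemma growth_aux (L : ℝ → G → G → ℝ) (x y : G) (δ : ℝ) (hδ : 0 < δ)
    (h : ∀ t ∈ Set.Ici (0:ℝ), ∀ t₁ ∈ Set.Ici (0:ℝ), |t - t₁| ≤ δ →
      ‖L t x y - L t₁ x y‖ ≤ 1) :
    ∀ t ∈ Set.Ici (0:ℝ), ‖L t x y‖ ≤ (‖L 0 x y‖ + 1) + (1/δ) * t := by
  have key : ∀ m : ℕ, ∀ t : ℝ, 0 ≤ t → t ≤ m * δ → ‖L t x y - L 0 x y‖ ≤ m := by
    intro m
    induction m with
    | zero =>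
      intro t ht ht'
      have : t = 0 := le_antisymm (by simpa using ht') ht
      simp [this]
    | succ m ih =>
      intro t ht ht'
      by_cases hc : t ≤ m * δ
      · exact (ih t ht hc).trans (by push_cast; linarith)
      · push_neg at hc
        have hmδ : (0:ℝ) ≤ m * δ := by positivity
        have h1 : ‖L t x y - L (m * δ) x y‖ ≤ 1 := by
          apply h t ht (m * δ) hmδ
          rw [abs_le]
          push_cast at ht' ⊢
          constructor <;> nlinarith
        have h2 := ih (m * δ) hmδ le_rfl
        calc ‖L t x y - L 0 x y‖
            ≤ ‖L t x y - L (m * δ) x y‖ + ‖L (m * δ) x y - L 0 x y‖ :=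
              norm_sub_le_norm_sub_add_norm_sub _ _ _
          _ ≤ 1 + m := add_le_add h1 h2
          _ ≤ (m + 1 : ℕ) := by push_cast; linarith
  intro t ht
  simp only [Set.mem_Ici] at ht
  have hdiv : 0 ≤ t / δ := by positivity
  set m : ℕ := ⌈t / δ⌉₊ with hm
  have h1 : t ≤ m * δ := by
    rw [← div_le_iff₀ hδ]
    exact Nat.le_ceil _
  have h2 : (m : ℝ) ≤ t / δ + 1 := (Nat.ceil_lt_add_one hdiv).le
  have := key m t ht h1
  have h3 : ‖L t x y‖ ≤ ‖L 0 x y‖ + m := by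
    have := norm_sub_norm_le (L t x y) (L 0 x y)
    linarith [this.trans (key m t ht h1)]
  have h4 : (m : ℝ) ≤ (1/δ) * t + 1 := by
    rw [div_eq_mul_inv] at h2
    calc (m:ℝ) ≤ t * δ⁻¹ + 1 := h2
      _ = (1/δ) * t + 1 := by ring
  linarith

end Aux

lemma exp_eq_pow (r T : ℝ) (k : ℕ) :
    Real.exp (-(r * k * T)) = (Real.exp (-(r * T))) ^ k := by
  rw [← Real.exp_nat_mul]
  ring_nf

lemma summable_aux (r T A B : ℝ) (hr : 0 < r) (hT : 0 < T) :
    Summable (fun k : ℕ => Real.exp (-(r * k * T)) * (A + B * k)) := by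
  have hq : ‖Real.exp (-(r * T))‖ < 1 := by
    rw [Real.norm_eq_abs, abs_of_pos (Real.exp_pos _)]
    rw [Real.exp_lt_one_iff]
    nlinarith
  have h1 : Summable (fun k : ℕ => A * (Real.exp (-(r * T))) ^ k) :=
    (summable_geometric_of_norm_lt_one hq).mul_left A
  have h2 : Summable (fun k : ℕ => B * ((k : ℝ) * (Real.exp (-(r * T))) ^ k)) := by
    have := summable_pow_mul_geometric_of_norm_lt_one (R := ℝ) 1 hq
    simp only [pow_one] at this
    exact this.mul_left B
  have := h1.add h2
  apply this.congr
  intro k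
  rw [exp_eq_pow]
  ring

/-- If `L` satisfies (P1), then `A₁(L)` is well defined (the series converges) and is
continuous on `[0,T] × ℝⁿ × ℝⁿ`. -/
theorem A1_continuous_of_P1
    (r T : ℝ) (hr : 0 < r) (hT : 0 < T) (n : ℕ) (hn : 0 < n)
    (L : ℝ → EuclideanSpace ℝ (Fin n) → EuclideanSpace ℝ (Fin n) → ℝ)
    (hP1 : P1Prop L) :
    (∀ s ∈ Set.Icc (0:ℝ) T, ∀ x y : EuclideanSpace ℝ (Fin n),
      Summable fun k : ℕ => Real.exp (-(r * k * T)) • L (s + k * T) x y) ∧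
    ContinuousOn
      (fun p : ℝ × EuclideanSpace ℝ (Fin n) × EuclideanSpace ℝ (Fin n) =>
        A1v r T L p.1 p.2.1 p.2.2)
      (Set.Icc (0:ℝ) T ×ˢ
        (Set.univ : Set (EuclideanSpace ℝ (Fin n) × EuclideanSpace ℝ (Fin n)))) := by
  -- growth bound for each fixed (x, y)
  have growth : ∀ x y : EuclideanSpace ℝ (Fin n), ∃ C D : ℝ, 0 ≤ C ∧ 0 ≤ D ∧
      ∀ t : ℝ, 0 ≤ t → ‖L t x y‖ ≤ C + D * t := by
    intro x y
    obtain ⟨δ, hδ, hδ'⟩ := hP1 x y 1 one_pos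
    refine ⟨‖L 0 x y‖ + 1, 1/δ, by positivity, by positivity, ?_⟩
    intro t ht
    exact growth_aux L x y δ hδ
      (fun t ht t₁ ht₁ htt => hδ' t ht t₁ ht₁ x y htt (by simpa using hδ.le) (by simpa using hδ.le)) t ht
  -- pointwise bound on a δ-ball around (x₀, y₀):
  have ptbound : ∀ x₀ y₀ : EuclideanSpace ℝ (Fin n), ∃ δ C D : ℝ, 0 < δ ∧ 0 ≤ C ∧ 0 ≤ D ∧
      ∀ t : ℝ, 0 ≤ t → ∀ x y, ‖x₀ - x‖ ≤ δ → ‖y₀ - y‖ ≤ δ → ‖L t x y‖ ≤ C + D * t := by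
    intro x₀ y₀
    obtain ⟨δ, hδ, hδ'⟩ := hP1 x₀ y₀ 1 one_pos
    obtain ⟨C, D, hC, hD, hCD⟩ := growth x₀ y₀
    refine ⟨δ, C + 1, D, hδ, by positivity, hD, ?_⟩
    intro t ht x y hx hy
    have h1 : ‖L t x₀ y₀ - L t x y‖ ≤ 1 := hδ' t ht t ht x y (by simpa using hδ.le) hx hy
    have h2 := hCD t ht
    have := norm_sub_norm_le (L t x₀ y₀) (L t x y)
    have h3 : ‖L t x y‖ ≤ ‖L t x₀ y₀‖ + 1 := by
      have h4 := norm_sub_norm_le (L t x y) (L t x₀ y₀)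
      rw [norm_sub_rev] at h1
      linarith
    linarith
  -- summability part
  have summ : ∀ s ∈ Set.Icc (0:ℝ) T, ∀ x y : EuclideanSpace ℝ (Fin n),
      Summable fun k : ℕ => Real.exp (-(r * k * T)) • L (s + k * T) x y := by
    intro s hs x y
    obtain ⟨C, D, hC, hD, hCD⟩ := growth x y
    apply Summable.of_norm_bounded (summable_aux r T (C + D * T) (D * T) hr hT)
    intro k
    have hst : (0:ℝ) ≤ s + k * T := by
      have := hs.1
      positivity
    have := hCD (s + k * T) hst
    rw [norm_smul, Real.norm_eq_abs, abs_of_pos (Real.exp_pos _)]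
    have hk : (0:ℝ) ≤ (k:ℝ) := Nat.cast_nonneg k
    have : ‖L (s + k * T) x y‖ ≤ (C + D * T) + (D * T) * k := by
      have hsT := hs.2
      nlinarith [hCD (s + k * T) hst]
    exact mul_le_mul_of_nonneg_left this (Real.exp_pos _).le
  refine ⟨summ, ?_⟩
  -- continuity of L on Ici 0 ×ˢ univ (as uncurried function of triple)
  have contL : ContinuousOn
      (fun q : ℝ × EuclideanSpace ℝ (Fin n) × EuclideanSpace ℝ (Fin n) => L q.1 q.2.1 q.2.2)
      (Set.Ici (0:ℝ) ×ˢ (Set.univ : Set (EuclideanSpace ℝ (Fin n) × EuclideanSpace ℝ (Fin n)))) := by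
    intro q hq
    rw [Metric.continuousWithinAt_iff]
    intro ε hε
    obtain ⟨δ, hδ, hδ'⟩ := hP1 q.2.1 q.2.2 (ε/2) (by linarith)
    refine ⟨δ, hδ, ?_⟩
    rintro ⟨t₁, x₁, y₁⟩ ⟨ht₁, -⟩ hdist
    have hq1 : q.1 ∈ Set.Ici (0:ℝ) := hq.1
    simp only [Prod.dist_eq, max_lt_iff] at hdist
    have h1 : |q.1 - t₁| ≤ δ := by
      rw [abs_sub_comm]; exact le_of_lt (by simpa [Real.dist_eq] using hdist.1)
    have h2 : ‖q.2.1 - x₁‖ ≤ δ := by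
      have := hdist.2.1
      rw [dist_eq_norm] at this
      rw [norm_sub_rev]; exact this.le
    have h3 : ‖q.2.2 - y₁‖ ≤ δ := by
      have := hdist.2.2
      rw [dist_eq_norm] at this
      rw [norm_sub_rev]; exact this.le
    have := hδ' q.1 hq1 t₁ ht₁ x₁ y₁ h1 h2 h3
    rw [dist_eq_norm, norm_sub_rev]
    linarith
  -- continuity
  intro p hp
  obtain ⟨δ, C, D, hδ, hC, hD, hbound⟩ := ptbound p.2.1 p.2.2
  set S' : Set (ℝ × EuclideanSpace ℝ (Fin n) × EuclideanSpace ℝ (Fin n)) :=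
    Set.Icc (0:ℝ) T ×ˢ (Metric.closedBall p.2.1 δ ×ˢ Metric.closedBall p.2.2 δ) with hS'
  have hmem : S' ∈ nhdsWithin p (Set.Icc (0:ℝ) T ×ˢ
      (Set.univ : Set (EuclideanSpace ℝ (Fin n) × EuclideanSpace ℝ (Fin n)))) := by
    have hball : (Set.univ : Set ℝ) ×ˢ (Metric.closedBall p.2.1 δ ×ˢ Metric.closedBall p.2.2 δ)
        ∈ nhds p := by
      apply prod_mem_nhds Filter.univ_mem
      exact prod_mem_nhds (Metric.closedBall_mem_nhds _ hδ) (Metric.closedBall_mem_nhds _ hδ)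
    have : S' = (Set.Icc (0:ℝ) T ×ˢ (Set.univ : Set (EuclideanSpace ℝ (Fin n) ×
        EuclideanSpace ℝ (Fin n)))) ∩
        ((Set.univ : Set ℝ) ×ˢ (Metric.closedBall p.2.1 δ ×ˢ Metric.closedBall p.2.2 δ)) := by
      ext q; simp only [hS', Set.mem_inter_iff, Set.mem_prod, Set.mem_univ, true_and, and_true]
    rw [this]
    exact inter_mem_nhdsWithin _ hball
  -- continuity of the tsum on S'
  have contsum : ContinuousOn
      (fun q : ℝ × EuclideanSpace ℝ (Fin n) × EuclideanSpace ℝ (Fin n) =>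
        ∑' k : ℕ, Real.exp (-(r * k * T)) • L (q.1 + k * T) q.2.1 q.2.2) S' := by
    apply continuousOn_tsum (f := fun (k : ℕ) (q : ℝ × EuclideanSpace ℝ (Fin n) × EuclideanSpace ℝ (Fin n)) => Real.exp (-(r * k * T)) • L (q.1 + k * T) q.2.1 q.2.2) (u := fun k : ℕ => Real.exp (-(r * k * T)) * ((C + D * T) + (D * T) * k))
    · intro k
      have hmap : Set.MapsTo
          (fun q : ℝ × EuclideanSpace ℝ (Fin n) × EuclideanSpace ℝ (Fin n) =>
            (q.1 + k * T, q.2.1, q.2.2)) S'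
          (Set.Ici (0:ℝ) ×ˢ (Set.univ : Set (EuclideanSpace ℝ (Fin n) ×
            EuclideanSpace ℝ (Fin n)))) := by
        rintro ⟨t, x, y⟩ ⟨ht, -⟩
        refine ⟨?_, trivial⟩
        have := ht.1
        have hk : (0:ℝ) ≤ (k:ℝ) := Nat.cast_nonneg k
        simp only [Set.mem_Ici]
        nlinarith
      have hcomp : ContinuousOn
          (fun q : ℝ × EuclideanSpace ℝ (Fin n) × EuclideanSpace ℝ (Fin n) =>
            L (q.1 + k * T) q.2.1 q.2.2) S' := by
        exact contL.comp ((continuous_fst.add continuous_const).prodMk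
          continuous_snd).continuousOn hmap
      exact hcomp.const_smul (Real.exp (-(r * k * T)))
    · exact summable_aux r T (C + D * T) (D * T) hr hT
    · rintro k ⟨t, x, y⟩ ⟨ht, hx, hy⟩
      have ht0 : (0:ℝ) ≤ t + k * T := by
        have := ht.1
        have hk : (0:ℝ) ≤ (k:ℝ) := Nat.cast_nonneg k
        nlinarith
      have hx' : ‖p.2.1 - x‖ ≤ δ := by
        rw [norm_sub_rev, ← dist_eq_norm]; exact hx
      have hy' : ‖p.2.2 - y‖ ≤ δ := by
        rw [norm_sub_rev, ← dist_eq_norm]; exact hy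
      have hb := hbound (t + k * T) ht0 x y hx' hy'
      rw [norm_smul, Real.norm_eq_abs, abs_of_pos (Real.exp_pos _)]
      have hk : (0:ℝ) ≤ (k:ℝ) := Nat.cast_nonneg k
      have : ‖L (t + k * T) x y‖ ≤ (C + D * T) + (D * T) * k := by
        have := ht.2
        nlinarith
      exact mul_le_mul_of_nonneg_left this (Real.exp_pos _).le
  have : ContinuousOn
      (fun q : ℝ × EuclideanSpace ℝ (Fin n) × EuclideanSpace ℝ (Fin n) =>
        A1v r T L q.1 q.2.1 q.2.2) S' := by
    unfold A1v
    exact contsum.const_smul (1 - Real.exp (-r * T))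
  have hpS' : p ∈ S' := by
    refine ⟨hp.1, ?_, ?_⟩ <;> simp [Metric.mem_closedBall, hδ.le]
  exact (this p hpS').mono_of_mem_nhdsWithin hmem
end

section
/- Let r > 0, T > 0, n ∈ ℕ* and L ∈ C¹(ℝ₊ × ℝⁿ × ℝⁿ, ℝ). If L satisfies properties (P1) and (P2) and its differential DL satisfies property (P1), then A₁(L) ∈ C¹([0,T] × ℝⁿ × ℝⁿ, ℝ) and D(A₁(L)) = A₁(DL), i.e. the Fréchet differential of the averaged Lagrangian is the average of the differential of L. -/
open MeasureTheory Real Set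

/-- Property (P2), with respect to a given differential `Φ'`. -/
def P2Prop {G F : Type*} [NormedAddCommGroup G] [NormedSpace ℝ G]
    [NormedAddCommGroup F] [NormedSpace ℝ F]
    (Φ : ℝ → G → G → F) (Φ' : ℝ → G → G → (ℝ × G × G →L[ℝ] F)) : Prop :=
  ∀ (x y : G), ∀ ε : ℝ, 0 < ε → ∃ η : ℝ, 0 < η ∧
    ∀ t ∈ Set.Ici (0:ℝ), ∀ t₁ ∈ Set.Ici (0:ℝ), ∀ x₁ y₁ : G,
      |t - t₁| ≤ η → ‖x - x₁‖ ≤ η → ‖y - y₁‖ ≤ η →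
        ‖Φ t₁ x₁ y₁ - Φ t x y - Φ' t x y (t₁ - t, x₁ - x, y₁ - y)‖ ≤
          ε * (|t - t₁| + ‖x - x₁‖ + ‖y - y₁‖)

section Aux
variable {G F : Type*} [NormedAddCommGroup G] [NormedAddCommGroup F] [NormedSpace ℝ F] [CompleteSpace F]

lemma P1_growth (Φ : ℝ → G → G → F) (h : P1Prop Φ) (x y : G) :
    ∃ C : ℝ, 0 ≤ C ∧ ∀ t : ℝ, 0 ≤ t → ‖Φ t x y‖ ≤ C * (1 + t) := by
  obtain ⟨δ, hδ, hδ'⟩ := h x y 1 one_pos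
  have key : ∀ m : ℕ, ∀ t : ℝ, 0 ≤ t → t ≤ m * δ → ‖Φ t x y - Φ 0 x y‖ ≤ m := by
    intro m
    induction m with
    | zero =>
      intro t ht ht'
      have : t = 0 := le_antisymm (by simpa using ht') ht
      simp [this]
    | succ m ih =>
      intro t ht ht'
      by_cases h1 : t ≤ δ
      · have := hδ' t ht 0 Set.self_mem_Ici x y (by rwa [sub_zero, abs_of_nonneg ht])
          (by simp [hδ.le]) (by simp [hδ.le])
        push_cast
        linarith
      · push_neg at h1
        have h2 : (0:ℝ) ≤ t - δ := by linarith
        have h3 : t - δ ≤ m * δ := by push_cast at ht' ⊢; linarith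
        have h4 := ih (t - δ) h2 h3
        have h5 := hδ' t ht (t - δ) h2 x y (by rw [sub_sub_cancel, abs_of_pos hδ])
          (by simp [hδ.le]) (by simp [hδ.le])
        calc ‖Φ t x y - Φ 0 x y‖ ≤ ‖Φ t x y - Φ (t - δ) x y‖ + ‖Φ (t - δ) x y - Φ 0 x y‖ := by
              have := norm_sub_le_norm_sub_add_norm_sub (Φ t x y) (Φ (t - δ) x y) (Φ 0 x y)
              exact this
          _ ≤ 1 + m := by linarith
          _ ≤ _ := by push_cast; linarith
  refine ⟨max (‖Φ 0 x y‖ + 1) (1/δ), le_max_of_le_left (by positivity), fun t ht => ?_⟩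
  set m : ℕ := ⌈t / δ⌉₊ with hm
  have h1 : t ≤ m * δ := by
    rw [← div_le_iff₀ hδ] at *
    · exact Nat.le_ceil _
  have h2 : (m : ℝ) ≤ t / δ + 1 := (Nat.ceil_lt_add_one (by positivity)).le
  have h3 := key m t ht h1
  have h4 : ‖Φ t x y‖ ≤ ‖Φ 0 x y‖ + (t / δ + 1) := by
    have := norm_le_norm_add_norm_sub' (Φ t x y) (Φ 0 x y)
    have h5 : ‖Φ t x y - Φ 0 x y‖ ≤ t / δ + 1 := h3.trans h2
    have := norm_sub_norm_le (Φ t x y) (Φ 0 x y)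
    linarith
  have hA : ‖Φ 0 x y‖ + 1 ≤ max (‖Φ 0 x y‖ + 1) (1/δ) := le_max_left _ _
  have hB : 1/δ ≤ max (‖Φ 0 x y‖ + 1) (1/δ) := le_max_right _ _
  have hd : t / δ = (1/δ) * t := by ring
  have : t / δ ≤ max (‖Φ 0 x y‖ + 1) (1/δ) * t := by
    rw [hd]; exact mul_le_mul_of_nonneg_right hB ht
  calc ‖Φ t x y‖ ≤ ‖Φ 0 x y‖ + 1 + t / δ := by linarith
    _ ≤ max (‖Φ 0 x y‖ + 1) (1/δ) * (1 + t) := by rw [mul_add, mul_one]; linarith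

lemma summable_aux_s18 {ρ : ℝ} (hρ0 : 0 ≤ ρ) (hρ1 : ρ < 1) (a b : ℝ) :
    Summable fun k : ℕ => ρ ^ k * (a + b * k) := by
  have h1 := (summable_geometric_of_lt_one hρ0 hρ1).mul_left a
  have h2 := (summable_pow_mul_geometric_of_norm_lt_one 1
    (r := ρ) (by rwa [Real.norm_eq_abs, abs_of_nonneg hρ0])).mul_left b
  have := h1.add h2
  refine this.congr fun k => ?_
  ring

lemma coef_eq (r T : ℝ) (k : ℕ) :
    Real.exp (-(r * k * T)) = Real.exp (-(r * T)) ^ k := by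
  rw [← Real.exp_nat_mul]; ring_nf

lemma summable_terms (r T : ℝ) (hr : 0 < r) (hT : 0 < T) (Φ : ℝ → G → G → F)
    (hΦ : P1Prop Φ) (s : ℝ) (hs : 0 ≤ s) (x y : G) :
    Summable fun k : ℕ => Real.exp (-(r * k * T)) • Φ (s + k * T) x y := by
  obtain ⟨C, hC, hCb⟩ := P1_growth Φ hΦ x y
  set ρ := Real.exp (-(r * T)) with hρ
  have hρ0 : 0 ≤ ρ := Real.exp_nonneg _
  have hρ1 : ρ < 1 := Real.exp_lt_one_iff.2 (by nlinarith)
  refine Summable.of_norm_bounded (summable_aux_s18 hρ0 hρ1 (C * (1 + s)) (C * T)) fun k => ?_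
  have h1 : (0:ℝ) ≤ s + k * T := by positivity
  have h2 := hCb _ h1
  rw [norm_smul, Real.norm_eq_abs, abs_of_pos (Real.exp_pos _), coef_eq]
  calc ρ ^ k * ‖Φ (s + k * T) x y‖ ≤ ρ ^ k * (C * (1 + (s + k * T))) := by
        exact mul_le_mul_of_nonneg_left h2 (by positivity)
    _ = ρ ^ k * (C * (1 + s) + C * T * k) := by ring

lemma norm_tsum_le_of_le {f : ℕ → F} {ρ c : ℝ} (hρ0 : 0 ≤ ρ) (hρ1 : ρ < 1)
    (hb : ∀ k : ℕ, ‖f k‖ ≤ ρ ^ k * c) : ‖∑' k, f k‖ ≤ (1 - ρ)⁻¹ * c := by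
  exact tsum_of_norm_bounded ((hasSum_geometric_of_lt_one hρ0 hρ1).mul_right c) hb

end Aux

set_option maxHeartbeats 2000000 in
/-- If `L ∈ C¹(ℝ₊ × ℝⁿ × ℝⁿ)` (with differential `L'`) satisfies (P1) and (P2) and `DL = L'`
satisfies (P1), then `A₁(L)` is `C¹` on `[0,T] × ℝⁿ × ℝⁿ` and `D(A₁(L)) = A₁(DL)`. -/
theorem A1_C1_of_P1_P2
    (r T : ℝ) (hr : 0 < r) (hT : 0 < T) (n : ℕ) (hn : 0 < n)
    (L : ℝ → EuclideanSpace ℝ (Fin n) → EuclideanSpace ℝ (Fin n) → ℝ)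
    (L' : ℝ → EuclideanSpace ℝ (Fin n) → EuclideanSpace ℝ (Fin n) →
      (ℝ × EuclideanSpace ℝ (Fin n) × EuclideanSpace ℝ (Fin n) →L[ℝ] ℝ))
    -- `L ∈ C¹(ℝ₊ × ℝⁿ × ℝⁿ, ℝ)` with differential `L'` :
    (hC1 : ∀ t ∈ Set.Ici (0:ℝ), ∀ x y : EuclideanSpace ℝ (Fin n),
      HasFDerivWithinAt
        (fun p : ℝ × EuclideanSpace ℝ (Fin n) × EuclideanSpace ℝ (Fin n) => L p.1 p.2.1 p.2.2)
        (L' t x y)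
        (Set.Ici (0:ℝ) ×ˢ
          (Set.univ : Set (EuclideanSpace ℝ (Fin n) × EuclideanSpace ℝ (Fin n)))) (t, x, y))
    (hDLcont : ContinuousOn
      (fun p : ℝ × EuclideanSpace ℝ (Fin n) × EuclideanSpace ℝ (Fin n) => L' p.1 p.2.1 p.2.2)
      (Set.Ici (0:ℝ) ×ˢ
        (Set.univ : Set (EuclideanSpace ℝ (Fin n) × EuclideanSpace ℝ (Fin n)))))
    (hP1 : P1Prop L) (hP2 : P2Prop L L') (hP1' : P1Prop L') :
    -- `A₁(L)` is differentiable on `[0,T] × ℝⁿ × ℝⁿ` with differential `A₁(DL)` :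
    (∀ p ∈ Set.Icc (0:ℝ) T ×ˢ
        (Set.univ : Set (EuclideanSpace ℝ (Fin n) × EuclideanSpace ℝ (Fin n))),
      HasFDerivWithinAt
        (fun q : ℝ × EuclideanSpace ℝ (Fin n) × EuclideanSpace ℝ (Fin n) =>
          A1v r T L q.1 q.2.1 q.2.2)
        (A1v r T L' p.1 p.2.1 p.2.2)
        (Set.Icc (0:ℝ) T ×ˢ
          (Set.univ : Set (EuclideanSpace ℝ (Fin n) × EuclideanSpace ℝ (Fin n)))) p) ∧
    -- and `A₁(L)`, `A₁(DL)` are continuous there (so `A₁(L)` is `C¹`) :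
    ContinuousOn
      (fun p : ℝ × EuclideanSpace ℝ (Fin n) × EuclideanSpace ℝ (Fin n) =>
        A1v r T L p.1 p.2.1 p.2.2)
      (Set.Icc (0:ℝ) T ×ˢ
        (Set.univ : Set (EuclideanSpace ℝ (Fin n) × EuclideanSpace ℝ (Fin n)))) ∧
    ContinuousOn
      (fun p : ℝ × EuclideanSpace ℝ (Fin n) × EuclideanSpace ℝ (Fin n) =>
        A1v r T L' p.1 p.2.1 p.2.2)
      (Set.Icc (0:ℝ) T ×ˢ
        (Set.univ : Set (EuclideanSpace ℝ (Fin n) × EuclideanSpace ℝ (Fin n)))) := by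

  have hrT : -(r * T) < 0 := by nlinarith
  have hρ0 : (0:ℝ) ≤ Real.exp (-(r * T)) := Real.exp_nonneg _
  have hρ1 : Real.exp (-(r * T)) < 1 := Real.exp_lt_one_iff.2 hrT
  have hone : (0:ℝ) < 1 - Real.exp (-(r * T)) := by linarith
  have hderiv : ∀ p ∈ Set.Icc (0:ℝ) T ×ˢ
        (Set.univ : Set (EuclideanSpace ℝ (Fin n) × EuclideanSpace ℝ (Fin n))),
      HasFDerivWithinAt
        (fun q : ℝ × EuclideanSpace ℝ (Fin n) × EuclideanSpace ℝ (Fin n) =>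
          A1v r T L q.1 q.2.1 q.2.2)
        (A1v r T L' p.1 p.2.1 p.2.2)
        (Set.Icc (0:ℝ) T ×ˢ
          (Set.univ : Set (EuclideanSpace ℝ (Fin n) × EuclideanSpace ℝ (Fin n)))) p := by
    rintro ⟨s, x, y⟩ ⟨hsIcc, -⟩
    have hs0 : (0:ℝ) ≤ s := hsIcc.1
    refine hasFDerivWithinAt_iff_isLittleO.2 (Asymptotics.isLittleO_iff.2 ?_)
    intro c hc
    obtain ⟨η, hη, hηP⟩ := hP2 x y (c/3) (by positivity)
    rw [Filter.eventually_iff, Metric.mem_nhdsWithin_iff]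
    refine ⟨η, hη, ?_⟩
    rintro ⟨s₁, x₁, y₁⟩ ⟨hball, hmem⟩
    have hs₁0 : (0:ℝ) ≤ s₁ := hmem.1.1
    have hdq : dist ((s₁, x₁, y₁) : ℝ × EuclideanSpace ℝ (Fin n) × EuclideanSpace ℝ (Fin n))
        (s, x, y) = max (dist s₁ s) (max (dist x₁ x) (dist y₁ y)) := by
      rw [Prod.dist_eq, Prod.dist_eq]
    have hball' : dist ((s₁, x₁, y₁) : ℝ × EuclideanSpace ℝ (Fin n) × EuclideanSpace ℝ (Fin n))
        (s, x, y) < η := Metric.mem_ball.1 hball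
    set N := dist ((s₁, x₁, y₁) : ℝ × EuclideanSpace ℝ (Fin n) × EuclideanSpace ℝ (Fin n))
      (s, x, y) with hN
    have hN0 : 0 ≤ N := dist_nonneg
    have hb1 : |s - s₁| ≤ N := by
      rw [hdq, abs_sub_comm, ← Real.dist_eq]; exact le_max_left _ _
    have hb2 : ‖x - x₁‖ ≤ N := by
      rw [hdq, ← dist_eq_norm, dist_comm]
      exact le_trans (le_max_left _ _) (le_max_right _ _)
    have hb3 : ‖y - y₁‖ ≤ N := by
      rw [hdq, ← dist_eq_norm, dist_comm]
      exact le_trans (le_max_right _ _) (le_max_right _ _)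
    have hb1' : |s - s₁| ≤ η := (hb1.trans_lt hball').le
    have hb2' : ‖x - x₁‖ ≤ η := (hb2.trans_lt hball').le
    have hb3' : ‖y - y₁‖ ≤ η := (hb3.trans_lt hball').le
    set v : ℝ × EuclideanSpace ℝ (Fin n) × EuclideanSpace ℝ (Fin n) :=
      (s₁ - s, x₁ - x, y₁ - y) with hv
    have hkey : ∀ k : ℕ, ‖L (s₁ + k*T) x₁ y₁ - L (s + k*T) x y
        - L' (s + k*T) x y v‖ ≤ c * N := by
      intro k
      have ht0 : s + k*T ∈ Set.Ici (0:ℝ) := by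
        simp only [Set.mem_Ici]; positivity
      have ht₁0 : s₁ + k*T ∈ Set.Ici (0:ℝ) := by
        simp only [Set.mem_Ici]; positivity
      have habs : |(s + k*T) - (s₁ + k*T)| = |s - s₁| := by congr 1; ring
      have h := hηP (s + k*T) ht0 (s₁ + k*T) ht₁0 x₁ y₁ (by rw [habs]; exact hb1') hb2' hb3'
      have harg : (((s₁ + k*T) - (s + k*T), x₁ - x, y₁ - y) :
          ℝ × EuclideanSpace ℝ (Fin n) × EuclideanSpace ℝ (Fin n)) = v := by
        have he : (s₁ + (k:ℝ)*T) - (s + (k:ℝ)*T) = s₁ - s := by ring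
        rw [hv, he]
      rw [harg, habs] at h
      have h3 : |s - s₁| + ‖x - x₁‖ + ‖y - y₁‖ ≤ 3 * N := by linarith
      calc ‖L (s₁ + k*T) x₁ y₁ - L (s + k*T) x y - L' (s + k*T) x y v‖
          ≤ c/3 * (|s - s₁| + ‖x - x₁‖ + ‖y - y₁‖) := h
        _ ≤ c/3 * (3 * N) := by
            exact mul_le_mul_of_nonneg_left h3 (by positivity)
        _ = c * N := by ring
    have hS1 := summable_terms r T hr hT L hP1 s₁ hs₁0 x₁ y₁
    have hS2 := summable_terms r T hr hT L hP1 s hs0 x y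
    have hSop := summable_terms r T hr hT L' hP1' s hs0 x y
    have hS3 : Summable fun k : ℕ => Real.exp (-(r * k * T)) • (L' (s + k*T) x y v) := by
      refine (hSop.mapL (ContinuousLinearMap.apply ℝ ℝ v)).congr fun k => ?_
      simp
    have htsum_apply : (∑' k : ℕ, Real.exp (-(r * k * T)) • L' (s + k*T) x y) v
        = ∑' k : ℕ, Real.exp (-(r * k * T)) • (L' (s + k*T) x y v) := by
      have h := (ContinuousLinearMap.apply ℝ ℝ v).map_tsum hSop
      simpa using h
    have happ : A1v r T L' s x y v = (1 - Real.exp (-r * T)) •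
        ∑' k : ℕ, Real.exp (-(r * k * T)) • (L' (s + k*T) x y v) := by
      simp only [A1v, ContinuousLinearMap.smul_apply]
      rw [htsum_apply]
    have hsub : ((s₁, x₁, y₁) : ℝ × EuclideanSpace ℝ (Fin n) × EuclideanSpace ℝ (Fin n))
        - (s, x, y) = v := rfl
    have hNnorm : ‖v‖ = N := by rw [hN, dist_eq_norm, hsub]
    simp only [Set.mem_setOf_eq]
    rw [hsub, hNnorm]
    have hdiff : A1v r T L s₁ x₁ y₁ - A1v r T L s x y - A1v r T L' s x y v
        = (1 - Real.exp (-(r * T))) •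
          ((∑' k : ℕ, Real.exp (-(r * k * T)) • L (s₁ + k*T) x₁ y₁)
            - (∑' k : ℕ, Real.exp (-(r * k * T)) • L (s + k*T) x y)
            - (∑' k : ℕ, Real.exp (-(r * k * T)) • (L' (s + k*T) x y v))) := by
      rw [happ]
      simp only [A1v, neg_mul]
      rw [smul_sub, smul_sub]
    have hnorm2 : ‖(∑' k : ℕ, Real.exp (-(r * k * T)) • L (s₁ + k*T) x₁ y₁)
            - (∑' k : ℕ, Real.exp (-(r * k * T)) • L (s + k*T) x y)
            - (∑' k : ℕ, Real.exp (-(r * k * T)) • (L' (s + k*T) x y v))‖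
        ≤ (1 - Real.exp (-(r * T)))⁻¹ * (c * N) := by
      rw [← ((hS1.hasSum.sub hS2.hasSum).sub hS3.hasSum).tsum_eq]
      refine norm_tsum_le_of_le hρ0 hρ1 fun k => ?_
      have hsp : Real.exp (-(r * k * T)) • L (s₁ + k*T) x₁ y₁
            - Real.exp (-(r * k * T)) • L (s + k*T) x y
            - Real.exp (-(r * k * T)) • (L' (s + k*T) x y v)
          = Real.exp (-(r * k * T)) •
            (L (s₁ + k*T) x₁ y₁ - L (s + k*T) x y - L' (s + k*T) x y v) := by
        rw [smul_sub, smul_sub]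
      show ‖Real.exp (-(r * k * T)) • L (s₁ + k*T) x₁ y₁
            - Real.exp (-(r * k * T)) • L (s + k*T) x y
            - Real.exp (-(r * k * T)) • (L' (s + k*T) x y v)‖
          ≤ Real.exp (-(r * T)) ^ k * (c * N)
      rw [hsp, norm_smul, Real.norm_eq_abs, abs_of_pos (Real.exp_pos _), coef_eq]
      exact mul_le_mul_of_nonneg_left (hkey k) (by positivity)
    calc ‖A1v r T L s₁ x₁ y₁ - A1v r T L s x y - A1v r T L' s x y v‖
        = (1 - Real.exp (-(r * T))) *
          ‖(∑' k : ℕ, Real.exp (-(r * k * T)) • L (s₁ + k*T) x₁ y₁)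
            - (∑' k : ℕ, Real.exp (-(r * k * T)) • L (s + k*T) x y)
            - (∑' k : ℕ, Real.exp (-(r * k * T)) • (L' (s + k*T) x y v))‖ := by
          rw [hdiff, norm_smul, Real.norm_eq_abs, abs_of_pos hone]
      _ ≤ (1 - Real.exp (-(r * T))) * ((1 - Real.exp (-(r * T)))⁻¹ * (c * N)) :=
          mul_le_mul_of_nonneg_left hnorm2 hone.le
      _ = c * N := by
          rw [← mul_assoc, mul_inv_cancel₀ hone.ne', one_mul]
  have hcontL' : ContinuousOn
      (fun p : ℝ × EuclideanSpace ℝ (Fin n) × EuclideanSpace ℝ (Fin n) =>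
        A1v r T L' p.1 p.2.1 p.2.2)
      (Set.Icc (0:ℝ) T ×ˢ
        (Set.univ : Set (EuclideanSpace ℝ (Fin n) × EuclideanSpace ℝ (Fin n)))) := by
    rintro ⟨s, x, y⟩ ⟨hsIcc, -⟩
    have hs0 : (0:ℝ) ≤ s := hsIcc.1
    rw [Metric.continuousWithinAt_iff]
    intro ε hε
    obtain ⟨δ, hδ, hδ'⟩ := hP1' x y (ε/2) (by positivity)
    refine ⟨δ, hδ, ?_⟩
    rintro ⟨s₁, x₁, y₁⟩ ⟨hsIcc₁, -⟩ hdist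
    have hs₁0 : (0:ℝ) ≤ s₁ := hsIcc₁.1
    have hdq : dist ((s₁, x₁, y₁) : ℝ × EuclideanSpace ℝ (Fin n) × EuclideanSpace ℝ (Fin n))
        (s, x, y) = max (dist s₁ s) (max (dist x₁ x) (dist y₁ y)) := by
      rw [Prod.dist_eq, Prod.dist_eq]
    rw [hdq] at hdist
    have hb1 : |s - s₁| ≤ δ := by
      rw [abs_sub_comm, ← Real.dist_eq]
      exact ((le_max_left _ _).trans_lt hdist).le
    have hb2 : ‖x - x₁‖ ≤ δ := by
      rw [← dist_eq_norm, dist_comm]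
      exact (((le_max_left _ _).trans (le_max_right _ _)).trans_lt hdist).le
    have hb3 : ‖y - y₁‖ ≤ δ := by
      rw [← dist_eq_norm, dist_comm]
      exact (((le_max_right _ _).trans (le_max_right _ _)).trans_lt hdist).le
    have hT1 := summable_terms r T hr hT L' hP1' s₁ hs₁0 x₁ y₁
    have hT2 := summable_terms r T hr hT L' hP1' s hs0 x y
    have hkey : ∀ k : ℕ, ‖L' (s₁ + k*T) x₁ y₁ - L' (s + k*T) x y‖ ≤ ε/2 := by
      intro k
      have ht0 : s + k*T ∈ Set.Ici (0:ℝ) := by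
        simp only [Set.mem_Ici]; positivity
      have ht₁0 : s₁ + k*T ∈ Set.Ici (0:ℝ) := by
        simp only [Set.mem_Ici]; positivity
      have habs : |(s + k*T) - (s₁ + k*T)| = |s - s₁| := by congr 1; ring
      have h := hδ' (s + k*T) ht0 (s₁ + k*T) ht₁0 x₁ y₁ (by rw [habs]; exact hb1) hb2 hb3
      rw [norm_sub_rev]
      exact h
    have hdiffeq : A1v r T L' s₁ x₁ y₁ - A1v r T L' s x y
        = (1 - Real.exp (-(r * T))) •
          ((∑' k : ℕ, Real.exp (-(r * k * T)) • L' (s₁ + k*T) x₁ y₁)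
            - (∑' k : ℕ, Real.exp (-(r * k * T)) • L' (s + k*T) x y)) := by
      simp only [A1v, neg_mul]
      rw [smul_sub]
    have hnorm2 : ‖(∑' k : ℕ, Real.exp (-(r * k * T)) • L' (s₁ + k*T) x₁ y₁)
            - (∑' k : ℕ, Real.exp (-(r * k * T)) • L' (s + k*T) x y)‖
        ≤ (1 - Real.exp (-(r * T)))⁻¹ * (ε/2) := by
      rw [← (hT1.hasSum.sub hT2.hasSum).tsum_eq]
      refine norm_tsum_le_of_le hρ0 hρ1 fun k => ?_
      show ‖Real.exp (-(r * k * T)) • L' (s₁ + k*T) x₁ y₁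
            - Real.exp (-(r * k * T)) • L' (s + k*T) x y‖
          ≤ Real.exp (-(r * T)) ^ k * (ε/2)
      have e1 : Real.exp (-(r * k * T)) • L' (s₁ + k*T) x₁ y₁
            - Real.exp (-(r * k * T)) • L' (s + k*T) x y
          = Real.exp (-(r * k * T)) • (L' (s₁ + k*T) x₁ y₁ - L' (s + k*T) x y) :=
        (smul_sub _ _ _).symm
      have e2 := norm_smul (Real.exp (-(r * k * T)))
        (L' (s₁ + k*T) x₁ y₁ - L' (s + k*T) x y)
      rw [e1, e2, Real.norm_eq_abs, abs_of_pos (Real.exp_pos _), coef_eq]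
      exact mul_le_mul_of_nonneg_left (hkey k) (by positivity)
    have key : ‖A1v r T L' s₁ x₁ y₁ - A1v r T L' s x y‖ ≤ ε/2 := by
      rw [hdiffeq]
      have e3 := norm_smul (1 - Real.exp (-(r * T)))
        ((∑' k : ℕ, Real.exp (-(r * k * T)) • L' (s₁ + k*T) x₁ y₁)
          - (∑' k : ℕ, Real.exp (-(r * k * T)) • L' (s + k*T) x y))
      rw [e3, Real.norm_eq_abs, abs_of_pos hone]
      calc (1 - Real.exp (-(r * T))) *
            ‖(∑' k : ℕ, Real.exp (-(r * k * T)) • L' (s₁ + k*T) x₁ y₁)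
              - (∑' k : ℕ, Real.exp (-(r * k * T)) • L' (s + k*T) x y)‖
          ≤ (1 - Real.exp (-(r * T))) * ((1 - Real.exp (-(r * T)))⁻¹ * (ε/2)) :=
            mul_le_mul_of_nonneg_left hnorm2 hone.le
        _ = ε/2 := by rw [← mul_assoc, mul_inv_cancel₀ hone.ne', one_mul]
    rw [dist_eq_norm]
    exact key.trans_lt (by linarith)
  exact ⟨hderiv, fun p hp => (hderiv p hp).continuousWithinAt, hcontL'⟩
end
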